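/- arXiv:1711.03149 — 4 statements merged into one kernel-verified Lean document; each statement's English description precedes it below -/
import Mathlib

section
/- (Uniform squared-bias bound for the rescaled prior, used in Theorem 3.) Let α, σ > 0 and let β, M > 0 satisfy β < 1 + 2α. There exist C > 0 and K > 0 such that for all integers m ≥ 1, all reals τ > 0 and n > 0 with n·τ/m ≥ K, and all θ ∈ H^β(M), Σ_{i=1}^∞ σ⁴·(m/τ)²·i^{2+4α}·θᵢ²/(n + σ²·(m/τ)·i^{1+2α})² ≤ C·M²·(τ·n/m)^{-2β/(1+2α)}. -/
open Finset

private lemma bern_aux {u q : ℝ} (hu0 : 0 < u) (hu1 : u ≤ 1) (hq : 0 ≤ q) :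
    u ^ q * (1 + q * (1 - u)) ≤ 1 := by
  have h1 : u ^ q ≤ Real.exp (-(q * (1 - u))) := by
    rw [Real.rpow_def_of_pos hu0, Real.exp_le_exp]
    have := Real.log_le_sub_one_of_pos hu0
    nlinarith
  have h2 : 1 + q * (1 - u) ≤ Real.exp (q * (1 - u)) := by
    have := Real.add_one_le_exp (q * (1 - u)); linarith
  calc u ^ q * (1 + q * (1 - u))
      ≤ Real.exp (-(q * (1 - u))) * Real.exp (q * (1 - u)) := by
        apply mul_le_mul h1 h2 (by nlinarith) (Real.exp_nonneg _)
    _ = 1 := by rw [← Real.exp_add]; simp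

private lemma tail_step {y q : ℝ} (hy : 1 ≤ y) (hq : 0 < q) :
    q * (y + 1) ^ (-(1 + q)) ≤ y ^ (-q) - (y + 1) ^ (-q) := by
  have hy0 : 0 < y := lt_of_lt_of_le one_pos hy
  have hy1 : 0 < y + 1 := by linarith
  have hu0 : 0 < y / (y + 1) := by positivity
  have hu1 : y / (y + 1) ≤ 1 := by rw [div_le_one hy1]; linarith
  have h := bern_aux hu0 hu1 hq.le
  have h1mu : 1 - y / (y + 1) = 1 / (y + 1) := by field_simp; ring
  rw [h1mu, Real.div_rpow hy0.le hy1.le] at h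
  have hA : 0 < y ^ q := Real.rpow_pos_of_pos hy0 q
  have hB : 0 < (y + 1) ^ q := Real.rpow_pos_of_pos hy1 q
  have hkey : y ^ q * ((y + 1) + q) ≤ (y + 1) ^ q * (y + 1) := by
    rw [div_mul_eq_mul_div, div_le_one hB] at h
    have h2 : y ^ q * ((y + 1) + q) = (y ^ q * (1 + q * (1 / (y + 1)))) * (y + 1) := by
      field_simp
    rw [h2]
    exact mul_le_mul_of_nonneg_right h hy1.le
  have e1 : (y + 1) ^ (-(1 + q)) = ((y + 1) * (y + 1) ^ q)⁻¹ := by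
    rw [Real.rpow_neg hy1.le, Real.rpow_add hy1, Real.rpow_one]
  rw [e1, Real.rpow_neg hy0.le, Real.rpow_neg hy1.le, ← div_eq_mul_inv,
    inv_sub_inv hA.ne' hB.ne']
  rw [div_le_div_iff₀ (by positivity) (by positivity)]
  nlinarith [mul_le_mul_of_nonneg_left hkey hB.le]

private lemma head_step {p : ℝ} (hp0 : 0 < p) (hp1 : p ≤ 1) (i : ℕ) :
    p * ((i : ℝ) + 1) ^ (p - 1) ≤ ((i : ℝ) + 1) ^ p - (i : ℝ) ^ p := by
  rcases Nat.eq_zero_or_pos i with rfl | hi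
  · simp only [Nat.cast_zero, zero_add, Real.one_rpow, Real.zero_rpow hp0.ne', mul_one]
    linarith
  · have hi' : 1 ≤ i := hi
    set x := (i : ℝ) with hx
    have hx1 : 1 ≤ x := by rw [hx]; exact_mod_cast hi'
    have hx0 : 0 < x := lt_of_lt_of_le one_pos hx1
    have hxp1 : 0 < x + 1 := by linarith
    have hs : (-1 : ℝ) ≤ -(1 / (x + 1)) := by
      rw [neg_le_neg_iff, div_le_one hxp1]; linarith
    have hber := rpow_one_add_le_one_add_mul_self hs hp0.le hp1
    have hu : 1 + -(1 / (x + 1)) = x / (x + 1) := by field_simp; ring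
    rw [hu, Real.div_rpow hx0.le hxp1.le] at hber
    have hP : 0 < (x + 1) ^ p := Real.rpow_pos_of_pos hxp1 p
    rw [div_le_iff₀ hP] at hber
    have h3 : (x + 1) ^ (p - 1) = (x + 1) ^ p / (x + 1) := by
      rw [Real.rpow_sub hxp1, Real.rpow_one]
    rw [h3]
    have h4 : (1 + p * -(1 / (x + 1))) * (x + 1) ^ p
        = (x + 1) ^ p - p * ((x + 1) ^ p / (x + 1)) := by field_simp; ring
    rw [h4] at hber
    linarith

private lemma head_sum {e : ℝ} (he : -1 < e) (N : ℕ) (hN : 1 ≤ N) :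
    ∑ i ∈ Finset.range N, ((i : ℝ) + 1) ^ e ≤ (1 + 1 / (e + 1)) * (N : ℝ) ^ (e + 1) := by
  have hN0 : (0 : ℝ) < N := by exact_mod_cast hN
  have hp0 : 0 < e + 1 := by linarith
  have hNp : 0 < (N : ℝ) ^ (e + 1) := Real.rpow_pos_of_pos hN0 _
  rcases le_or_gt 0 e with he0 | he0
  · have h1 : ∀ i ∈ Finset.range N, ((i : ℝ) + 1) ^ e ≤ (N : ℝ) ^ e := by
      intro i hi
      apply Real.rpow_le_rpow (by positivity) _ he0
      have : i + 1 ≤ N := Finset.mem_range.1 hi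
      exact_mod_cast this
    calc ∑ i ∈ Finset.range N, ((i : ℝ) + 1) ^ e
        ≤ ∑ _i ∈ Finset.range N, (N : ℝ) ^ e := Finset.sum_le_sum h1
      _ = (N : ℝ) * (N : ℝ) ^ e := by
          rw [Finset.sum_const, Finset.card_range, nsmul_eq_mul]
      _ = (N : ℝ) ^ (e + 1) := by
          rw [Real.rpow_add_one hN0.ne', mul_comm]
      _ ≤ (1 + 1 / (e + 1)) * (N : ℝ) ^ (e + 1) := by
          have : (0:ℝ) < 1 / (e + 1) := by positivity
          nlinarith
  · have hp1 : e + 1 ≤ 1 := by linarith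
    have step : ∀ i : ℕ, ((i : ℝ) + 1) ^ e
        ≤ ((((i + 1 : ℕ)) : ℝ) ^ (e + 1) - ((i : ℕ) : ℝ) ^ (e + 1)) / (e + 1) := by
      intro i
      have h := head_step hp0 hp1 i
      rw [show e + 1 - 1 = e from by ring] at h
      rw [le_div_iff₀ hp0]
      push_cast
      nlinarith [h]
    calc ∑ i ∈ Finset.range N, ((i : ℝ) + 1) ^ e
        ≤ ∑ i ∈ Finset.range N,
            ((((i + 1 : ℕ)) : ℝ) ^ (e + 1) - ((i : ℕ) : ℝ) ^ (e + 1)) / (e + 1) :=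
          Finset.sum_le_sum fun i _ => step i
      _ = ((N : ℝ) ^ (e + 1) - ((0 : ℕ) : ℝ) ^ (e + 1)) / (e + 1) := by
          rw [← Finset.sum_div, Finset.sum_range_sub (fun i : ℕ => ((i : ℕ) : ℝ) ^ (e + 1))]
      _ = (N : ℝ) ^ (e + 1) / (e + 1) := by
          norm_num [Real.zero_rpow hp0.ne']
      _ ≤ (1 + 1 / (e + 1)) * (N : ℝ) ^ (e + 1) := by
          rw [div_eq_mul_inv, mul_comm]
          have h1 : (0:ℝ) < 1 / (e + 1) := by positivity
          have h2 : ((e:ℝ) + 1)⁻¹ = 1 / (e + 1) := by rw [one_div]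
          nlinarith



/-- The hyperrectangle `H^β(M)` of `β`-regular signals in `ℓ²`, indexed so that
coordinate `i : ℕ` corresponds to the integer `i + 1`. -/
def hyperRect (β M : ℝ) : Set (ℕ → ℝ) :=
  {θ | (Summable fun i => (θ i) ^ 2) ∧
    ∀ i : ℕ, ((i : ℝ) + 1) ^ (1 + 2 * β) * (θ i) ^ 2 ≤ M ^ 2}

/-- Uniform squared-bias bound for the rescaled prior (used in Theorem 3): let `α, σ > 0`
and `β, M > 0` with `β < 1 + 2α`. There exist `C > 0` and `K > 0` such that for all
integers `m ≥ 1`, all reals `τ > 0` and `n > 0` with `nτ/m ≥ K`, and all `θ ∈ H^β(M)`,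
`Σᵢ σ⁴ (m/τ)² i^{2+4α} θᵢ²/(n + σ² (m/τ) i^{1+2α})² ≤ C M² (τ n/m)^{-2β/(1+2α)}`. -/
theorem uniform_squared_bias_rescaled_prior
    (α σ β M : ℝ) (hα : 0 < α) (hσ : 0 < σ) (hβ : 0 < β) (hM : 0 < M)
    (hβα : β < 1 + 2 * α) :
    ∃ C K : ℝ, 0 < C ∧ 0 < K ∧
      ∀ m : ℕ, 1 ≤ m → ∀ τ n : ℝ, 0 < τ → 0 < n → K ≤ n * τ / (m : ℝ) →
        ∀ θ ∈ hyperRect β M,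
          (∑' i : ℕ, σ ^ 4 * ((m : ℝ) / τ) ^ 2 * ((i : ℝ) + 1) ^ (2 + 4 * α) * (θ i) ^ 2
              / (n + σ ^ 2 * ((m : ℝ) / τ) * ((i : ℝ) + 1) ^ (1 + 2 * α)) ^ 2)
            ≤ C * M ^ 2 * (τ * n / (m : ℝ)) ^ (-(2 * β / (1 + 2 * α))) := by
  have he1 : (0:ℝ) < 2 * (1 + 2 * α) - 2 * β := by linarith
  have hq0 : (0:ℝ) < 2 * β := by linarith
  have hC0 : (0:ℝ) < (1 + 1 / (2 * (1 + 2 * α) - 2 * β)) * 2 ^ (2 * (1 + 2 * α) - 2 * β)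
      + 1 / (2 * β) := by
    have h2 : (0:ℝ) < (2:ℝ) ^ (2 * (1 + 2 * α) - 2 * β) := Real.rpow_pos_of_pos two_pos _
    have h3 : (0:ℝ) < 1 / (2 * (1 + 2 * α) - 2 * β) := by positivity
    have h4 : (0:ℝ) < 1 / (2 * β) := by positivity
    nlinarith
  refine ⟨((1 + 1 / (2 * (1 + 2 * α) - 2 * β)) * 2 ^ (2 * (1 + 2 * α) - 2 * β) + 1 / (2 * β))
      * (σ ^ 2) ^ (2 * β / (1 + 2 * α)), σ ^ 2,
    mul_pos hC0 (Real.rpow_pos_of_pos (pow_pos hσ 2) _), pow_pos hσ 2, ?_⟩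
  intro m hm τ n hτ hn hKn θ hθ
  obtain ⟨-, hbd⟩ := hθ
  set γ := 1 + 2 * α with hγdef
  set q := 2 * β with hqdef
  set e : ℝ := 2 * γ - (1 + q) with hedef
  have he1' : e + 1 = 2 * γ - q := by rw [hedef]; ring
  have hγpos : (0:ℝ) < γ := by rw [hγdef]; linarith
  have hqpos : (0:ℝ) < q := hq0
  have hepos : (0:ℝ) < e + 1 := by rw [he1', hγdef, hqdef]; linarith
  have hm0 : (0:ℝ) < (m:ℝ) := by exact_mod_cast hm
  have hσ2 : (0:ℝ) < σ ^ 2 := pow_pos hσ 2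
  set a := σ ^ 2 * ((m:ℝ) / τ) with hadef
  have ha : 0 < a := by rw [hadef]; exact mul_pos hσ2 (div_pos hm0 hτ)
  set ρ := n * τ / ((m:ℝ) * σ ^ 2) with hρdef
  have hρpos : 0 < ρ := by
    rw [hρdef]; exact div_pos (mul_pos hn hτ) (mul_pos hm0 hσ2)
  have hρ1 : 1 ≤ ρ := by
    rw [hρdef, le_div_iff₀ (mul_pos hm0 hσ2)]
    rw [le_div_iff₀ hm0] at hKn
    nlinarith
  have han : a * ρ = n := by
    rw [hadef, hρdef]; field_simp
  have hτn : τ * n / (m:ℝ) = σ ^ 2 * ρ := by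
    rw [hρdef]; field_simp
  set F : ℕ → ℝ := fun i => σ ^ 4 * ((m : ℝ) / τ) ^ 2 * ((i : ℝ) + 1) ^ (2 + 4 * α) * θ i ^ 2
      / (n + a * ((i : ℝ) + 1) ^ γ) ^ 2 with hFdef
  clear_value γ q e a ρ F
  have hFeq : ∀ i : ℕ, F i
      = (a * ((i:ℝ)+1) ^ γ) ^ 2 * θ i ^ 2 / (n + a * ((i:ℝ)+1) ^ γ) ^ 2 := by
    intro i
    have hb : (0:ℝ) ≤ (i:ℝ) + 1 := by positivity
    have hx : ((i:ℝ)+1) ^ (2 + 4*α) = (((i:ℝ)+1) ^ γ) ^ 2 := by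
      rw [← Real.rpow_natCast (((i:ℝ)+1) ^ γ) 2, ← Real.rpow_mul hb]
      congr 1
      rw [hγdef]
      push_cast
      ring
    simp only [hFdef]
    rw [hx, hadef]
    ring
  have hF0 : ∀ i : ℕ, 0 ≤ F i := by
    intro i
    rw [hFeq i]
    positivity
  have hθ2 : ∀ i : ℕ, θ i ^ 2 ≤ M ^ 2 * ((i:ℝ)+1) ^ (-(1+q)) := by
    intro i
    have hP : (0:ℝ) < (i:ℝ) + 1 := by positivity
    have h := hbd i
    have hpow : (0:ℝ) < ((i:ℝ)+1) ^ (1+q) := Real.rpow_pos_of_pos hP _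
    rw [Real.rpow_neg hP.le, ← div_eq_mul_inv, le_div_iff₀ hpow]
    rw [mul_comm] at h
    exact h
  have hFle1 : ∀ i : ℕ, F i ≤ M ^ 2 * ((i:ℝ)+1) ^ (-(1+q)) := by
    intro i
    have hP : (0:ℝ) < (i:ℝ) + 1 := by positivity
    have hPγ : (0:ℝ) < ((i:ℝ)+1) ^ γ := Real.rpow_pos_of_pos hP _
    have hA : 0 < a * ((i:ℝ)+1) ^ γ := mul_pos ha hPγ
    have h1 : F i ≤ θ i ^ 2 := by
      have hD : (0:ℝ) < (n + a * ((i:ℝ)+1)^γ) ^ 2 := pow_pos (by linarith) 2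
      rw [hFeq i, div_le_iff₀ hD]
      have hsq : (a * ((i:ℝ)+1)^γ) ^ 2 ≤ (n + a * ((i:ℝ)+1)^γ) ^ 2 :=
        pow_le_pow_left₀ hA.le (by linarith) 2
      calc (a * ((i:ℝ)+1)^γ) ^ 2 * θ i ^ 2
          = θ i ^ 2 * (a * ((i:ℝ)+1)^γ) ^ 2 := by ring
        _ ≤ θ i ^ 2 * (n + a * ((i:ℝ)+1)^γ) ^ 2 :=
            mul_le_mul_of_nonneg_left hsq (sq_nonneg _)
    exact h1.trans (hθ2 i)
  have hFle2 : ∀ i : ℕ, F i ≤ M ^ 2 / ρ ^ 2 * ((i:ℝ)+1) ^ e := by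
    intro i
    have hP : (0:ℝ) < (i:ℝ) + 1 := by positivity
    have hPγ : (0:ℝ) < ((i:ℝ)+1) ^ γ := Real.rpow_pos_of_pos hP _
    have hcomb : (((i:ℝ)+1) ^ γ) ^ 2 * ((i:ℝ)+1) ^ (-(1+q)) = ((i:ℝ)+1) ^ e := by
      rw [← Real.rpow_natCast (((i:ℝ)+1) ^ γ) 2, ← Real.rpow_mul hP.le,
        ← Real.rpow_add hP]
      congr 1
      rw [hedef]
      push_cast
      ring
    have hn2 : (0:ℝ) < n ^ 2 := pow_pos hn 2
    have h1 : F i ≤ (a * ((i:ℝ)+1)^γ) ^ 2 * θ i ^ 2 / n ^ 2 := by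
      have hA : 0 < a * ((i:ℝ)+1) ^ γ := mul_pos ha hPγ
      have hD : (0:ℝ) < (n + a * ((i:ℝ)+1)^γ) ^ 2 := pow_pos (by linarith) 2
      rw [hFeq i, div_le_div_iff₀ hD hn2]
      have hD2 : n ^ 2 ≤ (n + a * ((i:ℝ)+1)^γ) ^ 2 :=
        pow_le_pow_left₀ hn.le (by linarith) 2
      have hnum : (0:ℝ) ≤ (a * ((i:ℝ)+1)^γ) ^ 2 * θ i ^ 2 := by positivity
      exact mul_le_mul_of_nonneg_left hD2 hnum
    have h2 : (a * ((i:ℝ)+1)^γ) ^ 2 * θ i ^ 2 ≤ a ^ 2 * M ^ 2 * ((i:ℝ)+1) ^ e := by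
      calc (a * ((i:ℝ)+1)^γ) ^ 2 * θ i ^ 2
          ≤ (a * ((i:ℝ)+1)^γ) ^ 2 * (M ^ 2 * ((i:ℝ)+1) ^ (-(1+q))) :=
            mul_le_mul_of_nonneg_left (hθ2 i) (by positivity)
        _ = a ^ 2 * M ^ 2 * ((((i:ℝ)+1) ^ γ) ^ 2 * ((i:ℝ)+1) ^ (-(1+q))) := by ring
        _ = a ^ 2 * M ^ 2 * ((i:ℝ)+1) ^ e := by rw [hcomb]
    calc F i ≤ (a * ((i:ℝ)+1)^γ) ^ 2 * θ i ^ 2 / n ^ 2 := h1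
      _ ≤ a ^ 2 * M ^ 2 * ((i:ℝ)+1) ^ e / n ^ 2 := by gcongr
      _ = M ^ 2 / ρ ^ 2 * ((i:ℝ)+1) ^ e := by
          rw [← han]
          field_simp
  have hbase : Summable (fun i : ℕ => ((i:ℝ)+1) ^ (-(1+q))) := by
    have h1 : Summable (fun n : ℕ => (n:ℝ) ^ (-(1+q))) :=
      Real.summable_nat_rpow.2 (by linarith)
    have h2 := (summable_nat_add_iff 1).2 h1
    exact h2.congr fun i => by push_cast; ring_nf
  have hsumF : Summable F :=
    Summable.of_nonneg_of_le hF0 hFle1 (hbase.mul_left (M ^ 2))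
  set N := ⌈ρ ^ (1/γ)⌉₊ with hNdef
  have hrpos : 0 < ρ ^ (1/γ) := Real.rpow_pos_of_pos hρpos _
  have hr1 : 1 ≤ ρ ^ (1/γ) := Real.one_le_rpow hρ1 (by positivity)
  have hN1 : 1 ≤ N := Nat.one_le_ceil_iff.2 hrpos
  have hN0 : (0:ℝ) < (N:ℝ) := by exact_mod_cast hN1
  have hNge : ρ ^ (1/γ) ≤ (N:ℝ) := Nat.le_ceil _
  have hNle : (N:ℝ) ≤ 2 * ρ ^ (1/γ) := by
    have h := Nat.ceil_lt_add_one hrpos.le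
    rw [hNdef]
    linarith
  clear_value N
  rw [← Summable.sum_add_tsum_nat_add N hsumF]
  have hcancel : (σ ^ 2) ^ (q/γ) * (σ ^ 2) ^ (-(q/γ)) = 1 := by
    rw [← Real.rpow_add hσ2]; simp
  have hRHSeq : ((1 + 1 / (2 * γ - q)) * 2 ^ (2 * γ - q) + 1 / q)
        * (σ ^ 2) ^ (q / γ) * M ^ 2 * (τ * n / (m:ℝ)) ^ (-(q / γ))
      = ((1 + 1 / (2 * γ - q)) * 2 ^ (2 * γ - q) + 1 / q) * (M ^ 2 * ρ ^ (-(q/γ))) := by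
    rw [hτn, Real.mul_rpow hσ2.le hρpos.le]
    linear_combination ((1 + 1 / (2 * γ - q)) * 2 ^ (2 * γ - q) + 1 / q) * M ^ 2
      * ρ ^ (-(q/γ)) * hcancel
  rw [hRHSeq]
  have hhead : ∑ i ∈ Finset.range N, F i
      ≤ (1 + 1 / (2 * γ - q)) * 2 ^ (2 * γ - q) * (M ^ 2 * ρ ^ (-(q/γ))) := by
    have he : -1 < e := by rw [hedef]; rw [hγdef, hqdef]; linarith
    have hexp : ρ ^ ((1/γ) * (2 * γ - q)) = ρ ^ (-(q/γ)) * ρ ^ 2 := by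
      rw [← Real.rpow_natCast ρ 2, ← Real.rpow_add hρpos]
      congr 1
      push_cast
      field_simp
      ring
    calc ∑ i ∈ Finset.range N, F i
        ≤ ∑ i ∈ Finset.range N, (M ^ 2 / ρ ^ 2 * ((i:ℝ)+1) ^ e) :=
          Finset.sum_le_sum fun i _ => hFle2 i
      _ = M ^ 2 / ρ ^ 2 * ∑ i ∈ Finset.range N, ((i:ℝ)+1) ^ e := by rw [Finset.mul_sum]
      _ ≤ M ^ 2 / ρ ^ 2 * ((1 + 1 / (e + 1)) * (N:ℝ) ^ (e + 1)) :=
          mul_le_mul_of_nonneg_left (head_sum he N hN1) (by positivity)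
      _ ≤ M ^ 2 / ρ ^ 2 * ((1 + 1 / (e + 1)) * (2 * ρ ^ (1/γ)) ^ (e + 1)) := by
          have h1 : (N:ℝ) ^ (e + 1) ≤ (2 * ρ ^ (1/γ)) ^ (e + 1) :=
            Real.rpow_le_rpow hN0.le hNle hepos.le
          have h2 : (0:ℝ) ≤ 1 + 1 / (e + 1) := by positivity
          exact mul_le_mul_of_nonneg_left (mul_le_mul_of_nonneg_left h1 h2) (by positivity)
      _ = (1 + 1 / (2 * γ - q)) * 2 ^ (2 * γ - q) * (M ^ 2 * ρ ^ (-(q/γ))) := by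
          rw [Real.mul_rpow (by norm_num) hrpos.le, ← Real.rpow_mul hρpos.le, he1', hexp]
          field_simp
  have htail : (∑' i : ℕ, F (i + N)) ≤ 1 / q * (M ^ 2 * ρ ^ (-(q/γ))) := by
    have hNq : (N:ℝ) ^ (-q) ≤ ρ ^ (-(q/γ)) := by
      calc (N:ℝ) ^ (-q) ≤ (ρ ^ (1/γ)) ^ (-q) :=
            Real.rpow_le_rpow_of_nonpos hrpos hNge (neg_nonpos.2 hqpos.le)
        _ = ρ ^ (-(q/γ)) := by
            rw [← Real.rpow_mul hρpos.le]
            congr 1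
            field_simp
    apply Real.tsum_le_of_sum_range_le (fun i => hF0 (i + N))
    intro K
    set g : ℕ → ℝ := fun j => ((j:ℝ) + (N:ℝ)) ^ (-q) with hgdef
    clear_value g
    have hterm : ∀ i : ℕ, F (i + N) ≤ M ^ 2 / q * (g i - g (i + 1)) := by
      intro i
      have hy : 1 ≤ (i:ℝ) + (N:ℝ) := by
        have h1 : (1:ℝ) ≤ (N:ℝ) := by exact_mod_cast hN1
        have h2 : (0:ℝ) ≤ (i:ℝ) := by positivity
        linarith
      have hts := tail_step hy hqpos
      have h1 : F (i + N) ≤ M ^ 2 * (((i + N : ℕ):ℝ) + 1) ^ (-(1+q)) := hFle1 (i + N)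
      have hc : ((i + N : ℕ):ℝ) + 1 = (i:ℝ) + (N:ℝ) + 1 := by push_cast; ring
      rw [hc] at h1
      have hg1 : g (i + 1) = ((i:ℝ) + (N:ℝ) + 1) ^ (-q) := by
        simp only [hgdef]
        congr 1
        push_cast
        ring
      have hg0 : g i = ((i:ℝ) + (N:ℝ)) ^ (-q) := by simp only [hgdef]
      rw [hg0, hg1]
      calc F (i + N) ≤ M ^ 2 * ((i:ℝ) + (N:ℝ) + 1) ^ (-(1+q)) := h1
        _ ≤ M ^ 2 / q * (((i:ℝ) + (N:ℝ)) ^ (-q) - ((i:ℝ) + (N:ℝ) + 1) ^ (-q)) := by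
            rw [div_mul_eq_mul_div, le_div_iff₀ hqpos]
            calc M ^ 2 * ((i:ℝ) + (N:ℝ) + 1) ^ (-(1+q)) * q
                = M ^ 2 * (q * (((i:ℝ) + (N:ℝ)) + 1) ^ (-(1+q))) := by ring
              _ ≤ M ^ 2 * ((((i:ℝ) + (N:ℝ))) ^ (-q) - (((i:ℝ) + (N:ℝ)) + 1) ^ (-q)) :=
                  mul_le_mul_of_nonneg_left hts (by positivity)
    calc ∑ i ∈ Finset.range K, F (i + N)
        ≤ ∑ i ∈ Finset.range K, M ^ 2 / q * (g i - g (i + 1)) :=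
          Finset.sum_le_sum fun i _ => hterm i
      _ = M ^ 2 / q * (g 0 - g K) := by
          rw [← Finset.mul_sum, Finset.sum_range_sub' g K]
      _ ≤ M ^ 2 / q * (N:ℝ) ^ (-q) := by
          have hg0 : g 0 = (N:ℝ) ^ (-q) := by simp [hgdef]
          have hgK : 0 ≤ g K := by
            simp only [hgdef]
            positivity
          rw [hg0]
          apply mul_le_mul_of_nonneg_left (by linarith) (by positivity)
      _ ≤ 1 / q * (M ^ 2 * ρ ^ (-(q/γ))) := by
          calc M ^ 2 / q * (N:ℝ) ^ (-q) ≤ M ^ 2 / q * ρ ^ (-(q/γ)) :=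
              mul_le_mul_of_nonneg_left hNq (by positivity)
            _ = 1 / q * (M ^ 2 * ρ ^ (-(q/γ))) := by ring
  linarith [hhead, htail]
end

section
/- (Variance and spread asymptotics for the rescaled prior, used in Theorem 3.) For every α, σ > 0 there exist constants 0 < c ≤ C and K > 0 such that for all integers m ≥ 1 and all reals τ > 0, n > 0 with n·τ/m ≥ K, both c·(τ/m)^{1/(1+2α)}·n^{-2α/(1+2α)} ≤ Σ_{i=1}^∞ σ²·n/(n + σ²·(m/τ)·i^{1+2α})² ≤ C·(τ/m)^{1/(1+2α)}·n^{-2α/(1+2α)} and c·(τ/m)^{1/(1+2α)}·n^{-2α/(1+2α)} ≤ Σ_{i=1}^∞ σ²/(n + σ²·(m/τ)·i^{1+2α}) ≤ C·(τ/m)^{1/(1+2α)}·n^{-2α/(1+2α)}. -/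
open Real Finset

lemma bern_step (β x : ℝ) (hβ : 1 ≤ β) (hx : 0 < x) :
    (β - 1) * (x + 1) ^ (-β) ≤ x ^ (1 - β) - (x + 1) ^ (1 - β) := by
  have hx1 : (0:ℝ) < x + 1 := by linarith
  have h1 : (x + 1) ^ (1 - β) = (x + 1) * (x + 1) ^ (-β) := by
    rw [show (1 - β) = 1 + (-β) by ring, Real.rpow_add hx1, Real.rpow_one]
  have h2 : x ^ (1 - β) = x * x ^ (-β) := by
    rw [show (1 - β) = 1 + (-β) by ring, Real.rpow_add hx, Real.rpow_one]
  have hb : 1 + β * (1 / x) ≤ (1 + 1 / x) ^ β := by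
    have h0 : (0:ℝ) ≤ 1/x := by positivity
    exact one_add_mul_self_le_rpow_one_add (by linarith) hβ
  have hquot : (1 + 1 / x) ^ β = (x + 1) ^ β / x ^ β := by
    rw [show 1 + 1/x = (x+1)/x by field_simp, Real.div_rpow hx1.le hx.le]
  have hxb : (0:ℝ) < x ^ β := Real.rpow_pos_of_pos hx β
  have hx1b : (0:ℝ) < (x + 1) ^ β := Real.rpow_pos_of_pos hx1 β
  have key : (x + β) * (x + 1) ^ (-β) ≤ x ^ (1 - β) := by
    rw [Real.rpow_neg hx1.le, h2, Real.rpow_neg hx.le]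
    rw [hquot] at hb
    rw [mul_inv_le_iff₀ hx1b]
    have h3 := mul_le_mul_of_nonneg_left hb hx.le
    calc x + β = x * (1 + β * (1/x)) := by field_simp
      _ ≤ x * ((x+1)^β / x^β) := h3
      _ = x * (x^β)⁻¹ * (x+1)^β := by field_simp
  nlinarith [key, h1, Real.rpow_nonneg hx1.le (-β)]

lemma tail_sum (β : ℝ) (hβ : 1 < β) (M : ℕ) (hM : 1 ≤ M) :
    ∑' i : ℕ, ((i : ℝ) + M + 1) ^ (-β) ≤ (M : ℝ) ^ (1 - β) / (β - 1) := by
  have hβ1 : (0:ℝ) < β - 1 := by linarith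
  set F : ℕ → ℝ := fun i => ((M:ℝ) + i) ^ (1 - β) / (β - 1) with hF
  apply Real.tsum_le_of_sum_range_le
  · intro i; positivity
  · intro k
    have hterm : ∀ i ∈ Finset.range k, ((i : ℝ) + M + 1) ^ (-β) ≤ F i - F (i + 1) := by
      intro i _
      have hx : (0:ℝ) < (M:ℝ) + i := by
        have h1 : (1:ℝ) ≤ (M:ℝ) := by exact_mod_cast hM
        positivity
      have hb := bern_step β ((M:ℝ) + i) hβ.le hx
      simp only [hF]
      push_cast
      rw [div_sub_div_same, le_div_iff₀ hβ1]
      calc ((i:ℝ) + M + 1) ^ (-β) * (β - 1)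
          = (β - 1) * (((M:ℝ) + i) + 1) ^ (-β) := by ring_nf
        _ ≤ ((M:ℝ) + i) ^ (1-β) - (((M:ℝ) + i) + 1) ^ (1-β) := hb
        _ = ((M:ℝ) + i) ^ (1-β) - ((M:ℝ) + ((i:ℝ)+1)) ^ (1-β) := by ring_nf
    calc ∑ i ∈ Finset.range k, ((i : ℝ) + M + 1) ^ (-β)
        ≤ ∑ i ∈ Finset.range k, (F i - F (i + 1)) := Finset.sum_le_sum hterm
      _ = F 0 - F k := Finset.sum_range_sub' F k
      _ ≤ F 0 := by
          have : (0:ℝ) ≤ F k := by simp only [hF]; positivity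
          linarith
      _ = (M : ℝ) ^ (1 - β) / (β - 1) := by simp [hF]


open Real Finset

section
variable (σ β n a : ℝ)

lemma summable_shift (hβ : 1 < β) (c : ℕ) :
    Summable (fun i : ℕ => ((i : ℝ) + c) ^ (-β)) := by
  have hbase : Summable (fun i : ℕ => ((i : ℝ)) ^ (-β)) :=
    Real.summable_nat_rpow.mpr (by linarith)
  have := (summable_nat_add_iff c).mpr hbase
  exact this.congr (by intro i; push_cast; ring_nf)

lemma summable_S1 (hσ : 0 < σ) (hβ : 1 < β) (hn : 0 < n) (ha : 0 < a) :
    Summable (fun i : ℕ => σ ^ 2 / (n + a * ((i : ℝ) + 1) ^ β)) := by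
  have hsh := (summable_shift β hβ 1).mul_left (σ ^ 2 / a)
  apply Summable.of_nonneg_of_le _ _ hsh
  · intro i; positivity
  · intro i
    have hp : (0:ℝ) < ((i:ℝ) + 1) ^ β := by positivity
    have h0 : (0:ℝ) ≤ a * ((i:ℝ) + 1) ^ β := by positivity
    have h1 : σ ^ 2 / (n + a * ((i : ℝ) + 1) ^ β) ≤ σ ^ 2 / (a * ((i:ℝ)+1)^β) := by
      gcongr
      linarith
    calc σ ^ 2 / (n + a * ((i : ℝ) + 1) ^ β) ≤ σ ^ 2 / (a * ((i:ℝ)+1)^β) := h1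
      _ = σ ^ 2 / a * ((i:ℝ)+1)^(-β) := by
          rw [Real.rpow_neg (by positivity), div_mul_eq_div_div, div_eq_mul_inv]
      _ = σ ^ 2 / a * (((i:ℝ) + (1:ℕ)))^(-β) := by norm_num

lemma term2_le_term1 (hσ : 0 < σ) (hn : 0 < n) (ha : 0 < a) (i : ℕ) :
    σ ^ 2 * n / (n + a * ((i : ℝ) + 1) ^ β) ^ 2 ≤ σ ^ 2 / (n + a * ((i : ℝ) + 1) ^ β) := by
  have hp : (0:ℝ) ≤ a * ((i:ℝ) + 1) ^ β := by positivity
  have hD : (0:ℝ) < n + a * ((i : ℝ) + 1) ^ β := by linarith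
  have hDn : n ≤ n + a * ((i : ℝ) + 1) ^ β := by linarith
  have hkey := mul_le_mul_of_nonneg_left ((div_le_one hD).mpr hDn)
    (show (0:ℝ) ≤ σ ^ 2 / (n + a * ((i : ℝ) + 1) ^ β) by positivity)
  rw [mul_one] at hkey
  calc σ ^ 2 * n / (n + a * ((i : ℝ) + 1) ^ β) ^ 2
      = σ ^ 2 / (n + a * ((i : ℝ) + 1) ^ β) * (n / (n + a * ((i : ℝ) + 1) ^ β)) := by
        rw [div_mul_div_comm]; ring
    _ ≤ σ ^ 2 / (n + a * ((i : ℝ) + 1) ^ β) := hkey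

lemma summable_S2 (hσ : 0 < σ) (hβ : 1 < β) (hn : 0 < n) (ha : 0 < a) :
    Summable (fun i : ℕ => σ ^ 2 * n / (n + a * ((i : ℝ) + 1) ^ β) ^ 2) :=
  Summable.of_nonneg_of_le (fun i => by positivity) (term2_le_term1 σ β n a hσ hn ha)
    (summable_S1 σ β n a hσ hβ hn ha)

lemma S2_le_S1 (hσ : 0 < σ) (hβ : 1 < β) (hn : 0 < n) (ha : 0 < a) :
    (∑' i : ℕ, σ ^ 2 * n / (n + a * ((i : ℝ) + 1) ^ β) ^ 2)
      ≤ ∑' i : ℕ, σ ^ 2 / (n + a * ((i : ℝ) + 1) ^ β) :=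
  Summable.tsum_le_tsum (term2_le_term1 σ β n a hσ hn ha)
    (summable_S2 σ β n a hσ hβ hn ha) (summable_S1 σ β n a hσ hβ hn ha)

lemma rpow_beta (hβ : 1 < β) (hn : 0 < n) (ha : 0 < a) :
    ((n / a) ^ (1 / β)) ^ β = n / a := by
  rw [← Real.rpow_mul (by positivity : (0:ℝ) ≤ n/a),
    one_div_mul_cancel (by linarith : β ≠ 0), Real.rpow_one]

lemma lower_S2 (hσ : 0 < σ) (hβ : 1 < β) (hn : 0 < n) (ha : 0 < a)
    (hR : 1 ≤ (n / a) ^ (1 / β)) :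
    σ ^ 2 * ((n / a) ^ (1 / β)) / (8 * n)
      ≤ ∑' i : ℕ, σ ^ 2 * n / (n + a * ((i : ℝ) + 1) ^ β) ^ 2 := by
  set R := (n / a) ^ (1 / β) with hRdef
  have hRpos : 0 < R := lt_of_lt_of_le one_pos hR
  have hRβ : R ^ β = n / a := rpow_beta β n a hβ hn ha
  set N := ⌊R⌋₊ with hNdef
  have hN1 : 1 ≤ N := Nat.le_floor (by exact_mod_cast hR)
  have hNR : (N : ℝ) ≤ R := Nat.floor_le hRpos.le
  have hN1' : (1:ℝ) ≤ (N:ℝ) := by exact_mod_cast hN1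
  have hR2N : R ≤ 2 * N := by
    have := Nat.lt_floor_add_one R
    push_cast at this ⊢
    linarith
  have key : ∀ i ∈ Finset.range N, σ ^ 2 / (4 * n) ≤
      σ ^ 2 * n / (n + a * ((i : ℝ) + 1) ^ β) ^ 2 := by
    intro i hi
    have hiN : (i : ℝ) + 1 ≤ N := by
      have : i + 1 ≤ N := Finset.mem_range.mp hi
      exact_mod_cast this
    have hle : ((i : ℝ) + 1) ^ β ≤ R ^ β :=
      Real.rpow_le_rpow (by positivity) (hiN.trans hNR) (by linarith)
    have hna : a * ((i : ℝ) + 1) ^ β ≤ n := by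
      rw [hRβ] at hle
      calc a * ((i : ℝ) + 1) ^ β ≤ a * (n / a) := by gcongr
        _ = n := by field_simp
    have hD0 : (0:ℝ) < n + a * ((i : ℝ) + 1) ^ β := by positivity
    have hD2 : n + a * ((i : ℝ) + 1) ^ β ≤ 2 * n := by linarith
    rw [div_le_div_iff₀ (by positivity) (by positivity)]
    nlinarith [mul_self_le_mul_self hD0.le hD2, sq_nonneg σ]
  have hsumN : (N : ℝ) * (σ ^ 2 / (4 * n)) ≤
      ∑ i ∈ Finset.range N, σ ^ 2 * n / (n + a * ((i : ℝ) + 1) ^ β) ^ 2 := by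
    calc (N : ℝ) * (σ ^ 2 / (4 * n))
        = ∑ _i ∈ Finset.range N, σ ^ 2 / (4 * n) := by
          rw [Finset.sum_const, Finset.card_range, nsmul_eq_mul]
      _ ≤ _ := Finset.sum_le_sum key
  have hsub : ∑ i ∈ Finset.range N, σ ^ 2 * n / (n + a * ((i : ℝ) + 1) ^ β) ^ 2
      ≤ ∑' i : ℕ, σ ^ 2 * n / (n + a * ((i : ℝ) + 1) ^ β) ^ 2 :=
    Summable.sum_le_tsum _ (fun i _ => by positivity) (summable_S2 σ β n a hσ hβ hn ha)
  have : σ ^ 2 * R / (8 * n) ≤ (N : ℝ) * (σ ^ 2 / (4 * n)) := by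
    have hNmul : (N : ℝ) * (σ ^ 2 / (4 * n)) = (N:ℝ) * σ ^ 2 / (4 * n) := by ring
    rw [hNmul, div_le_div_iff₀ (by positivity) (by positivity)]
    nlinarith [mul_le_mul_of_nonneg_left hR2N (by positivity : (0:ℝ) ≤ σ ^ 2 * (4 * n))]
  linarith

lemma upper_S1 (hσ : 0 < σ) (hβ : 1 < β) (hn : 0 < n) (ha : 0 < a)
    (hR : 1 ≤ (n / a) ^ (1 / β)) :
    (∑' i : ℕ, σ ^ 2 / (n + a * ((i : ℝ) + 1) ^ β))
      ≤ (2 + 1 / (β - 1)) * (σ ^ 2 * ((n / a) ^ (1 / β)) / n) := by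
  set R := (n / a) ^ (1 / β) with hRdef
  have hRpos : 0 < R := lt_of_lt_of_le one_pos hR
  have hRβ : R ^ β = n / a := rpow_beta β n a hβ hn ha
  have hβ1 : (0:ℝ) < β - 1 := by linarith
  set M := ⌊R⌋₊ + 1 with hMdef
  have hM1 : 1 ≤ M := Nat.le_add_left 1 _
  have hRM : R ≤ (M : ℝ) := by
    have := Nat.lt_floor_add_one R
    rw [hMdef]; push_cast
    linarith
  have hMR : (M : ℝ) ≤ 2 * R := by
    have h1 : ((⌊R⌋₊ : ℝ)) ≤ R := Nat.floor_le hRpos.le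
    rw [hMdef]; push_cast
    linarith
  have hsum1 := summable_S1 σ β n a hσ hβ hn ha
  rw [← Summable.sum_add_tsum_nat_add M hsum1]
  have hhead : ∑ i ∈ Finset.range M, σ ^ 2 / (n + a * ((i : ℝ) + 1) ^ β)
      ≤ 2 * R * σ ^ 2 / n := by
    have step : ∀ i ∈ Finset.range M, σ ^ 2 / (n + a * ((i : ℝ) + 1) ^ β) ≤ σ ^ 2 / n := by
      intro i _
      have h0 : (0:ℝ) ≤ a * ((i : ℝ) + 1) ^ β := by positivity
      gcongr
      linarith
    calc ∑ i ∈ Finset.range M, σ ^ 2 / (n + a * ((i : ℝ) + 1) ^ β)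
        ≤ ∑ _i ∈ Finset.range M, σ ^ 2 / n := Finset.sum_le_sum step
      _ = (M : ℝ) * (σ ^ 2 / n) := by
          rw [Finset.sum_const, Finset.card_range, nsmul_eq_mul]
      _ ≤ 2 * R * (σ ^ 2 / n) := by
          gcongr
      _ = 2 * R * σ ^ 2 / n := by ring
  have htail : (∑' i : ℕ, σ ^ 2 / (n + a * (((i + M : ℕ) : ℝ) + 1) ^ β))
      ≤ σ ^ 2 * R / (n * (β - 1)) := by
    have hstep : ∀ i : ℕ, σ ^ 2 / (n + a * (((i + M : ℕ) : ℝ) + 1) ^ β)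
        ≤ σ ^ 2 / a * ((i : ℝ) + M + 1) ^ (-β) := by
      intro i
      have hc : (((i + M : ℕ) : ℝ) + 1) = (i : ℝ) + M + 1 := by push_cast; ring
      rw [hc]
      have hx : (0:ℝ) < (i : ℝ) + M + 1 := by positivity
      have hp : (0:ℝ) < ((i : ℝ) + M + 1) ^ β := by positivity
      calc σ ^ 2 / (n + a * ((i : ℝ) + M + 1) ^ β)
          ≤ σ ^ 2 / (a * ((i : ℝ) + M + 1) ^ β) := by
            have h0 : (0:ℝ) ≤ a * ((i : ℝ) + M + 1) ^ β := by positivity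
            gcongr
            linarith
        _ = σ ^ 2 / a * ((i : ℝ) + M + 1) ^ (-β) := by
            rw [Real.rpow_neg hx.le, div_mul_eq_div_div, div_eq_mul_inv]
    have hsumtail : Summable (fun i : ℕ => σ ^ 2 / (n + a * (((i + M : ℕ) : ℝ) + 1) ^ β)) := by
      have := (summable_nat_add_iff M).mpr hsum1
      exact this.congr (by intro i; push_cast; ring_nf)
    have hsumrhs : Summable (fun i : ℕ => σ ^ 2 / a * ((i : ℝ) + M + 1) ^ (-β)) := by
      have := (summable_shift β hβ (M + 1)).mul_left (σ ^ 2 / a)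
      exact this.congr (by intro i; push_cast; ring_nf)
    have h1 := Summable.tsum_le_tsum hstep hsumtail hsumrhs
    have h2 : (∑' i : ℕ, σ ^ 2 / a * ((i : ℝ) + M + 1) ^ (-β))
        = σ ^ 2 / a * ∑' i : ℕ, ((i : ℝ) + M + 1) ^ (-β) := tsum_mul_left
    have h3 := tail_sum β hβ M hM1
    have h4 : (M : ℝ) ^ (1 - β) ≤ R ^ (1 - β) :=
      Real.rpow_le_rpow_of_nonpos hRpos hRM (by linarith)
    have h5 : R ^ (1 - β) = R * (a / n) := by
      rw [show (1 - β) = 1 + (-β) by ring, Real.rpow_add hRpos, Real.rpow_one,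
        Real.rpow_neg hRpos.le, hRβ]
      field_simp
    have h6 : σ ^ 2 / a * ((M : ℝ) ^ (1 - β) / (β - 1)) ≤ σ ^ 2 * R / (n * (β - 1)) := by
      rw [h5] at h4
      calc σ ^ 2 / a * ((M : ℝ) ^ (1 - β) / (β - 1))
          ≤ σ ^ 2 / a * (R * (a / n) / (β - 1)) := by gcongr
        _ = σ ^ 2 * R / (n * (β - 1)) := by field_simp
    calc (∑' i : ℕ, σ ^ 2 / (n + a * (((i + M : ℕ) : ℝ) + 1) ^ β))
        ≤ ∑' i : ℕ, σ ^ 2 / a * ((i : ℝ) + M + 1) ^ (-β) := h1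
      _ = σ ^ 2 / a * ∑' i : ℕ, ((i : ℝ) + M + 1) ^ (-β) := h2
      _ ≤ σ ^ 2 / a * ((M : ℝ) ^ (1 - β) / (β - 1)) := by gcongr
      _ ≤ σ ^ 2 * R / (n * (β - 1)) := h6
  have hfin : 2 * R * σ ^ 2 / n + σ ^ 2 * R / (n * (β - 1))
      = (2 + 1 / (β - 1)) * (σ ^ 2 * R / n) := by
    field_simp
  calc (∑ i ∈ Finset.range M, σ ^ 2 / (n + a * ((i : ℝ) + 1) ^ β))
        + ∑' i : ℕ, σ ^ 2 / (n + a * (((i + M : ℕ) : ℝ) + 1) ^ β)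
      ≤ 2 * R * σ ^ 2 / n + σ ^ 2 * R / (n * (β - 1)) := add_le_add hhead htail
    _ = (2 + 1 / (β - 1)) * (σ ^ 2 * R / n) := hfin

end

lemma scale_eq (α σ τ n m : ℝ) (hα : 0 < α) (hσ : 0 < σ) (hτ : 0 < τ) (hn : 0 < n)
    (hm : 0 < m) :
    σ ^ 2 * ((n / (σ ^ 2 * (m / τ))) ^ (1 / (1 + 2 * α))) / n
      = σ ^ (2 - 2 / (1 + 2 * α)) * (τ / m) ^ (1 / (1 + 2 * α))
        * n ^ (-(2 * α / (1 + 2 * α))) := by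
  have hβ : (0:ℝ) < 1 + 2 * α := by linarith
  have h1 : n / (σ ^ 2 * (m / τ)) = n * (τ / m) / σ ^ 2 := by
    field_simp
  rw [h1, Real.div_rpow (by positivity) (by positivity),
    Real.mul_rpow hn.le (by positivity)]
  have hs2 : ((σ:ℝ) ^ 2) ^ (1 / (1 + 2 * α)) = σ ^ (2 / (1 + 2 * α)) := by
    rw [← Real.rpow_natCast σ 2, ← Real.rpow_mul hσ.le]
    congr 1
    push_cast
    ring
  rw [hs2, Real.rpow_sub hσ]
  have hσ2 : σ ^ (2:ℝ) = σ ^ 2 := by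
    rw [← Real.rpow_natCast σ 2]
    norm_num
  have hneg : n ^ (-(2 * α / (1 + 2 * α))) = n ^ (1 / (1 + 2 * α)) / n := by
    rw [show -(2 * α / (1 + 2 * α)) = 1 / (1 + 2 * α) - 1 by field_simp; ring,
      Real.rpow_sub hn, Real.rpow_one]
  rw [hσ2, hneg]
  ring




/-- Variance and spread asymptotics for the rescaled prior (used in Theorem 3): for every
`α, σ > 0` there exist `0 < c ≤ C` and `K > 0` such that for all integers `m ≥ 1` and all
reals `τ > 0`, `n > 0` with `nτ/m ≥ K`, both
`Σᵢ σ² n/(n + σ² (m/τ) i^{1+2α})²` and `Σᵢ σ²/(n + σ² (m/τ) i^{1+2α})`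
lie between `c (τ/m)^{1/(1+2α)} n^{-2α/(1+2α)}` and `C (τ/m)^{1/(1+2α)} n^{-2α/(1+2α)}`. -/
theorem variance_spread_asymptotics_rescaled_prior
    (α σ : ℝ) (hα : 0 < α) (hσ : 0 < σ) :
    ∃ c C K : ℝ, 0 < c ∧ c ≤ C ∧ 0 < K ∧
      ∀ m : ℕ, 1 ≤ m → ∀ τ n : ℝ, 0 < τ → 0 < n → K ≤ n * τ / (m : ℝ) →
        (c * (τ / (m : ℝ)) ^ (1 / (1 + 2 * α)) * n ^ (-(2 * α / (1 + 2 * α)))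
            ≤ (∑' i : ℕ, σ ^ 2 * n
                / (n + σ ^ 2 * ((m : ℝ) / τ) * ((i : ℝ) + 1) ^ (1 + 2 * α)) ^ 2) ∧
          (∑' i : ℕ, σ ^ 2 * n
                / (n + σ ^ 2 * ((m : ℝ) / τ) * ((i : ℝ) + 1) ^ (1 + 2 * α)) ^ 2)
            ≤ C * (τ / (m : ℝ)) ^ (1 / (1 + 2 * α)) * n ^ (-(2 * α / (1 + 2 * α)))) ∧
        (c * (τ / (m : ℝ)) ^ (1 / (1 + 2 * α)) * n ^ (-(2 * α / (1 + 2 * α)))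
            ≤ (∑' i : ℕ, σ ^ 2
                / (n + σ ^ 2 * ((m : ℝ) / τ) * ((i : ℝ) + 1) ^ (1 + 2 * α))) ∧
          (∑' i : ℕ, σ ^ 2
                / (n + σ ^ 2 * ((m : ℝ) / τ) * ((i : ℝ) + 1) ^ (1 + 2 * α)))
            ≤ C * (τ / (m : ℝ)) ^ (1 / (1 + 2 * α)) * n ^ (-(2 * α / (1 + 2 * α)))) := by
  have hβ : (1:ℝ) < 1 + 2 * α := by linarith
  have hβ0 : (0:ℝ) < 1 + 2 * α := by linarith
  have h2α : (0:ℝ) < 1 + 2 * α - 1 := by linarith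
  set s : ℝ := σ ^ (2 - 2 / (1 + 2 * α)) with hsdef
  have hs : 0 < s := Real.rpow_pos_of_pos hσ _
  have hq : (0:ℝ) < 1 / (1 + 2 * α - 1) := by positivity
  refine ⟨s / 8, (2 + 1 / (1 + 2 * α - 1)) * s, σ ^ 2, by linarith, ?_, by positivity, ?_⟩
  · nlinarith [mul_pos hq hs, hs]
  intro m hm τ n hτ hn hK
  have hm' : (0:ℝ) < (m : ℝ) := by exact_mod_cast hm
  set a := σ ^ 2 * ((m : ℝ) / τ) with hadef
  have ha : 0 < a := by positivity
  have hR : 1 ≤ (n / a) ^ (1 / (1 + 2 * α)) := by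
    have h2 : (1:ℝ) ≤ n / a := by
      rw [hadef]
      have he : n / (σ ^ 2 * ((m:ℝ) / τ)) = (n * τ / (m:ℝ)) / σ ^ 2 := by
        field_simp
      rw [he, le_div_iff₀ (by positivity)]
      linarith
    calc (1:ℝ) = 1 ^ (1 / (1 + 2 * α)) := (Real.one_rpow _).symm
      _ ≤ (n / a) ^ (1 / (1 + 2 * α)) :=
          Real.rpow_le_rpow (by norm_num) h2 (by positivity)
  have hEq := scale_eq α σ τ n (m : ℝ) hα hσ hτ hn hm'
  rw [← hadef] at hEq
  have low2 := lower_S2 σ (1 + 2 * α) n a hσ hβ hn ha hR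
  have up1 := upper_S1 σ (1 + 2 * α) n a hσ hβ hn ha hR
  have le21 := S2_le_S1 σ (1 + 2 * α) n a hσ hβ hn ha
  have e2 : σ ^ 2 * ((n / a) ^ (1 / (1 + 2 * α))) / (8 * n)
      = σ ^ 2 * ((n / a) ^ (1 / (1 + 2 * α))) / n / 8 := by
    rw [div_div]
    congr 1
    ring
  rw [e2, hEq] at low2
  rw [hEq] at up1
  refine ⟨⟨?_, ?_⟩, ?_, ?_⟩
  · linarith
  · linarith
  · linarith
  · linarith
end

section
/- (Tail lower bound for the over-smoothed squared bias, key step in Theorem 7.) For every β > 0 there exists c > 0 such that for all σ > 0, all n > 0, and every integer N ≥ (n/σ²)^{1/(2+2β)}, Σ_{i=N}^∞ σ⁴·i^{3+2β}/(n + σ²·i^{2+2β})² ≥ c·N^{-2β}. In particular, with N the least integer ≥ (n/(σ²·√m))^{1/(1+2β)} this yields the lower bound of order (n/√m)^{-2β/(1+2β)} used in the proof of Theorem 7 whenever this N exceeds (n/σ²)^{1/(2+2β)}. -/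
/-- Tail lower bound for the over-smoothed squared bias (key step in Theorem 7): for every
`β > 0` there exists `c > 0` such that for all `σ > 0`, all `n > 0`, and every integer
`N ≥ (n/σ²)^{1/(2+2β)}`,
`Σ_{i=N}^∞ σ⁴ i^{3+2β}/(n + σ² i^{2+2β})² ≥ c N^{-2β}`. -/
theorem oversmoothed_bias_tail_lower_bound
    (β : ℝ) (hβ : 0 < β) :
    ∃ c : ℝ, 0 < c ∧
      ∀ σ : ℝ, 0 < σ → ∀ n : ℝ, 0 < n → ∀ N : ℕ,
        (n / σ ^ 2) ^ (1 / (2 + 2 * β)) ≤ (N : ℝ) →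
        c * (N : ℝ) ^ (-(2 * β))
          ≤ ∑' i : ℕ, if N ≤ i then
              σ ^ 4 * (i : ℝ) ^ (3 + 2 * β) / (n + σ ^ 2 * (i : ℝ) ^ (2 + 2 * β)) ^ 2
            else 0 := by
  refine ⟨(1/4) * 2 ^ (-(1 + 2*β)), by positivity, ?_⟩
  intro σ hσ n hn N hN
  have he : (0:ℝ) < 2 + 2*β := by linarith
  have hq : (0:ℝ) < n / σ^2 := by positivity
  have hN0 : 0 < N := by
    rcases Nat.eq_zero_or_pos N with h | h
    · exfalso
      rw [h] at hN
      have hpos := Real.rpow_pos_of_pos hq (1/(2+2*β))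
      rw [Nat.cast_zero] at hN
      linarith
    · exact h
  have hNR : (0:ℝ) < N := by exact_mod_cast hN0
  -- key: n ≤ σ^2 * i^(2+2β) for natural i ≥ N
  have key : ∀ i : ℕ, N ≤ i → n ≤ σ^2 * (i:ℝ)^(2+2*β) := by
    intro i hi
    have hiR : (N:ℝ) ≤ i := by exact_mod_cast hi
    have heq : ((n/σ^2) ^ (1/(2+2*β))) ^ (2+2*β) = n/σ^2 := by
      rw [← Real.rpow_mul hq.le, one_div_mul_cancel he.ne', Real.rpow_one]
    have h1 : n/σ^2 ≤ (i:ℝ)^(2+2*β) := by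
      calc n/σ^2 = ((n/σ^2) ^ (1/(2+2*β))) ^ (2+2*β) := heq.symm
        _ ≤ (i:ℝ)^(2+2*β) :=
          Real.rpow_le_rpow (Real.rpow_nonneg hq.le _) (hN.trans hiR) he.le
    rw [div_le_iff₀ (by positivity)] at h1
    linarith [h1]
  -- rpow identity used twice
  have rid : ∀ i : ℕ, 0 < (i:ℝ) →
      (i:ℝ)^(-(1 + 2*β)) * ((i:ℝ)^(2+2*β))^2 = (i:ℝ)^(3+2*β) := by
    intro i hi0
    rw [← Real.rpow_natCast ((i:ℝ)^(2+2*β)) 2, ← Real.rpow_mul hi0.le,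
      ← Real.rpow_add hi0]
    congr 1
    push_cast
    ring
  -- per-term lower bound for i ≥ N
  have term_lb : ∀ i : ℕ, N ≤ i →
      (1/4) * (i:ℝ)^(-(1 + 2*β))
        ≤ σ ^ 4 * (i : ℝ) ^ (3 + 2 * β) / (n + σ ^ 2 * (i : ℝ) ^ (2 + 2 * β)) ^ 2 := by
    intro i hi
    have hi0 : (0:ℝ) < i := lt_of_lt_of_le hNR (by exact_mod_cast hi)
    have hx : (0:ℝ) < (i:ℝ)^(2+2*β) := Real.rpow_pos_of_pos hi0 _
    have h1 : σ ^ 4 * (i : ℝ) ^ (3 + 2 * β) / (2 * (σ ^ 2 * (i:ℝ)^(2+2*β))) ^ 2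
        ≤ σ ^ 4 * (i : ℝ) ^ (3 + 2 * β) / (n + σ ^ 2 * (i : ℝ) ^ (2 + 2 * β)) ^ 2 := by
      gcongr
      all_goals first | positivity | linarith [key i hi]
    refine le_trans (le_of_eq ?_) h1
    rw [eq_div_iff (by positivity)]
    linear_combination (σ^4) * rid i hi0
  -- summability of the series
  have hsum : Summable (fun i : ℕ => if N ≤ i then
      σ ^ 4 * (i : ℝ) ^ (3 + 2 * β) / (n + σ ^ 2 * (i : ℝ) ^ (2 + 2 * β)) ^ 2 else 0) := by
    have hg : Summable (fun i : ℕ => (i:ℝ) ^ (-(1 + 2*β))) := by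
      rw [Real.summable_nat_rpow]
      linarith
    refine Summable.of_nonneg_of_le (fun i => ?_) (fun i => ?_) hg
    · split
      · positivity
      · exact le_rfl
    · by_cases h : N ≤ i
      · simp only [h, if_true]
        have hi0 : (0:ℝ) < i := lt_of_lt_of_le hNR (by exact_mod_cast h)
        have hx : (0:ℝ) < (i:ℝ)^(2+2*β) := Real.rpow_pos_of_pos hi0 _
        have h2 : σ ^ 4 * (i : ℝ) ^ (3 + 2 * β) / (n + σ ^ 2 * (i : ℝ) ^ (2 + 2 * β)) ^ 2
            ≤ σ ^ 4 * (i : ℝ) ^ (3 + 2 * β) / (σ ^ 2 * (i:ℝ)^(2+2*β)) ^ 2 := by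
          gcongr
          all_goals first | positivity | linarith [hn.le]
        refine h2.trans (le_of_eq ?_)
        rw [div_eq_iff (by positivity)]
        linear_combination (-(σ^4)) * rid i hi0
      · simp only [h, if_false]
        positivity
  -- compare with the finite sum over Ico N (2N)
  have hfin : ∑ i ∈ Finset.Ico N (2*N), ((1/4) * (2*(N:ℝ))^(-(1 + 2*β)))
      ≤ ∑' i : ℕ, if N ≤ i then
          σ ^ 4 * (i : ℝ) ^ (3 + 2 * β) / (n + σ ^ 2 * (i : ℝ) ^ (2 + 2 * β)) ^ 2 else 0 := by
    refine le_trans ?_ (Summable.sum_le_tsum (Finset.Ico N (2*N)) (fun i _ => ?_) hsum)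
    · refine Finset.sum_le_sum (fun i hi => ?_)
      rw [Finset.mem_Ico] at hi
      rw [if_pos hi.1]
      refine le_trans ?_ (term_lb i hi.1)
      have hi0 : (0:ℝ) < i := lt_of_lt_of_le hNR (by exact_mod_cast hi.1)
      have hi2 : (i:ℝ) ≤ 2*(N:ℝ) := by exact_mod_cast hi.2.le
      have := Real.rpow_le_rpow_of_nonpos hi0 hi2 (by linarith : -(1 + 2*β) ≤ 0)
      linarith
    · split
      · positivity
      · exact le_rfl
  refine le_trans (le_of_eq ?_) hfin
  rw [Finset.sum_const, Nat.card_Ico]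
  have h2N : (2*(N:ℝ)) ^ (-(1 + 2*β)) = 2 ^ (-(1 + 2*β)) * (N:ℝ) ^ (-(1 + 2*β)) := by
    rw [Real.mul_rpow (by norm_num) hNR.le]
  have hNN : (N:ℝ) * (N:ℝ) ^ (-(1 + 2*β)) = (N:ℝ) ^ (-(2*β)) := by
    nth_rewrite 1 [← Real.rpow_one (N:ℝ)]
    rw [← Real.rpow_add hNR]
    congr 1
    ring
  have hcard : ((2*N - N : ℕ) : ℝ) = (N:ℝ) := by
    have h : 2*N - N = N := by omega
    rw [h]
  rw [nsmul_eq_mul, hcard, h2N]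
  linear_combination (-(1/4) * (2:ℝ) ^ (-(1 + 2*β))) * hNN
end

section
/- (Mean and variance asymptotics of the over-smoothed Gaussian quadratic form, used in Theorem 7.) For every σ, β > 0 there exist constants 0 < c ≤ C and N such that for all n ≥ N, c·n^{-(1+2β)/(2+2β)} ≤ Σ_{i=1}^∞ σ²·n/(n + σ²·i^{2+2β})² ≤ C·n^{-(1+2β)/(2+2β)} and c·n^{-(3+4β)/(2+2β)} ≤ Σ_{i=1}^∞ σ⁴·n²/(n + σ²·i^{2+2β})⁴ ≤ C·n^{-(3+4β)/(2+2β)}. Consequently, if (Uᵢ) are i.i.d. standard Gaussian random variables, the random series S = Σᵢ σ²·n·Uᵢ²/(n + σ²·i^{2+2β})² has mean of exact order n^{-(1+2β)/(2+2β)} and variance of exact order n^{-(3+4β)/(2+2β)}, so its standard deviation is of smaller order than its mean. -/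
open Real Filter Finset

section myaux
lemma my_bracket_low {q x : ℝ} (hq : 1 ≤ q) (hx : 1 ≤ x) :
    q * (x + 1) ^ (-(q + 1)) ≤ x ^ (-q) - (x + 1) ^ (-q) := by
  have hx0 : (0:ℝ) < x := lt_of_lt_of_le one_pos hx
  have hx1 : (0:ℝ) < x + 1 := by linarith
  have hA : (0:ℝ) < x ^ q := Real.rpow_pos_of_pos hx0 q
  have hBq : (0:ℝ) < (x + 1) ^ q := Real.rpow_pos_of_pos hx1 q
  have hAB : x ^ q ≤ (x + 1) ^ q :=
    Real.rpow_le_rpow hx0.le (by linarith) (by linarith)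
  have hs : (-1:ℝ) ≤ 1/x := by
    have : (0:ℝ) ≤ 1/x := by positivity
    linarith
  have hb : 1 + q * (1/x) ≤ (1 + 1/x) ^ q := one_add_mul_self_le_rpow_one_add hs hq
  have h1 : (1 + 1/x : ℝ) = (x+1)/x := by field_simp
  rw [h1, Real.div_rpow hx1.le hx0.le] at hb
  have hb2 : (1 + q * (1/x)) * x ^ q ≤ (x + 1) ^ q := (le_div_iff₀ hA).mp hb
  have hb3 : x * x ^ q + q * x ^ q ≤ x * (x + 1) ^ q := by
    have h := mul_le_mul_of_nonneg_left hb2 hx0.le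
    have e : x * ((1 + q * (1/x)) * x ^ q) = x * x ^ q + q * x ^ q := by
      field_simp
    rw [e] at h; linarith
  have h4 : q * x ^ q ≤ ((x + 1) ^ q - x ^ q) * (x + 1) := by nlinarith
  have hq1 : (x + 1) ^ (q + 1) = (x + 1) ^ q * (x + 1) := by
    rw [Real.rpow_add hx1, Real.rpow_one]
  rw [Real.rpow_neg hx0.le, Real.rpow_neg hx1.le, Real.rpow_neg hx1.le, hq1]
  have hrhs : (x ^ q)⁻¹ - ((x + 1) ^ q)⁻¹ = ((x + 1) ^ q - x ^ q) / (x ^ q * (x + 1) ^ q) := by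
    field_simp
  rw [hrhs, show q * ((x + 1) ^ q * (x + 1))⁻¹ = q / ((x + 1) ^ q * (x + 1)) from
    (div_eq_mul_inv _ _).symm, div_le_div_iff₀ (by positivity) (by positivity)]
  nlinarith [mul_le_mul_of_nonneg_right h4 hBq.le]

lemma my_bracket_high {q x : ℝ} (hq : 1 ≤ q) (hx : 1 ≤ x) :
    x ^ (-q) - (x + 1) ^ (-q) ≤ q * x ^ (-(q + 1)) := by
  have hx0 : (0:ℝ) < x := lt_of_lt_of_le one_pos hx
  have hx1 : (0:ℝ) < x + 1 := by linarith
  have hA : (0:ℝ) < x ^ q := Real.rpow_pos_of_pos hx0 q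
  have hBq : (0:ℝ) < (x + 1) ^ q := Real.rpow_pos_of_pos hx1 q
  have hAB : x ^ q ≤ (x + 1) ^ q :=
    Real.rpow_le_rpow hx0.le (by linarith) (by linarith)
  have hs : (-1:ℝ) ≤ -(1/(x+1)) := by
    have : 1/(x+1) ≤ 1 := by rw [div_le_one hx1]; linarith
    linarith
  have hb : 1 + q * (-(1/(x+1))) ≤ (1 + -(1/(x+1))) ^ q :=
    one_add_mul_self_le_rpow_one_add hs hq
  have h1 : (1 + -(1/(x+1)) : ℝ) = x/(x+1) := by field_simp; ring
  rw [h1, Real.div_rpow hx0.le hx1.le] at hb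
  have hb2 : (1 + q * (-(1/(x+1)))) * (x + 1) ^ q ≤ x ^ q := (le_div_iff₀ hBq).mp hb
  have hb3 : (x+1) * (x + 1) ^ q - q * (x + 1) ^ q ≤ (x+1) * x ^ q := by
    have h := mul_le_mul_of_nonneg_left hb2 hx1.le
    have e : (x+1) * ((1 + q * (-(1/(x+1)))) * (x + 1) ^ q)
        = (x+1) * (x + 1) ^ q - q * (x + 1) ^ q := by
      field_simp; ring
    rw [e] at h; linarith
  have h4 : ((x + 1) ^ q - x ^ q) * x ≤ q * (x + 1) ^ q := by nlinarith
  have hq1 : x ^ (q + 1) = x ^ q * x := by rw [Real.rpow_add hx0, Real.rpow_one]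
  rw [Real.rpow_neg hx0.le, Real.rpow_neg hx1.le, Real.rpow_neg hx0.le, hq1]
  have hrhs : (x ^ q)⁻¹ - ((x + 1) ^ q)⁻¹ = ((x + 1) ^ q - x ^ q) / (x ^ q * (x + 1) ^ q) := by
    field_simp
  rw [hrhs, show q * (x ^ q * x)⁻¹ = q / (x ^ q * x) from (div_eq_mul_inv _ _).symm,
    div_le_div_iff₀ (by positivity) (by positivity)]
  nlinarith [mul_le_mul_of_nonneg_right h4 hA.le]

lemma my_tail_bounds {p B : ℝ} (hp : 2 ≤ p) (hB : 2*(p-1) ≤ B) :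
    Summable (fun i : ℕ => (B + (i:ℝ) + 1) ^ (-p)) ∧
    1/(2*(p-1)) * B ^ (1-p) ≤ (∑' i : ℕ, (B + (i:ℝ) + 1) ^ (-p)) ∧
    (∑' i : ℕ, (B + (i:ℝ) + 1) ^ (-p)) ≤ 1/(p-1) * B ^ (1-p) := by
  set q : ℝ := p - 1 with hqdef
  have hq : 1 ≤ q := by rw [hqdef]; linarith
  have hq0 : (0:ℝ) < q := by linarith
  have hB2 : (2:ℝ) ≤ B := by nlinarith
  have hB0 : (0:ℝ) < B := by linarith
  have hep : (1 - p) = -q := by rw [hqdef]; ring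
  have hep2 : -p = -(q+1) := by rw [hqdef]; ring
  rw [hep, hep2]
  set f : ℕ → ℝ := fun i => (B + (i:ℝ) + 1) ^ (-(q+1)) with hfdef
  set g : ℕ → ℝ := fun i => (B + (i:ℝ)) ^ (-q) with hgdef
  have hxi : ∀ i : ℕ, (1:ℝ) ≤ B + i := fun i => by
    have : (0:ℝ) ≤ i := Nat.cast_nonneg i
    linarith
  have hg1 : ∀ i : ℕ, g (i+1) = ((B + (i:ℝ)) + 1) ^ (-q) := by
    intro i; simp only [hgdef]; push_cast; ring_nf
  have hL : ∀ i : ℕ, q * f i ≤ g i - g (i+1) := by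
    intro i
    have := my_bracket_low hq (hxi i)
    rw [hg1 i]
    simp only [hfdef]
    calc q * (B + (i:ℝ) + 1) ^ (-(q+1)) = q * ((B + (i:ℝ)) + 1) ^ (-(q+1)) := by ring_nf
      _ ≤ (B + (i:ℝ)) ^ (-q) - ((B + (i:ℝ)) + 1) ^ (-q) := this
  have hH : ∀ i : ℕ, g i - g (i+1) ≤ q * (B + (i:ℝ)) ^ (-(q+1)) := by
    intro i
    rw [hg1 i]
    exact my_bracket_high hq (hxi i)
  have hfnn : ∀ i : ℕ, 0 ≤ f i := fun i => Real.rpow_nonneg (by linarith [hxi i]) _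
  have hg0 : g 0 = B ^ (-q) := by simp [hgdef]
  have hgnn : ∀ i : ℕ, 0 ≤ g i := fun i => Real.rpow_nonneg (by linarith [hxi i]) _
  -- partial sum upper bound
  have hub : ∀ N : ℕ, ∑ i ∈ Finset.range N, f i ≤ 1/q * B ^ (-q) := by
    intro N
    have h1 : ∑ i ∈ Finset.range N, (q * f i) ≤ ∑ i ∈ Finset.range N, (g i - g (i+1)) :=
      Finset.sum_le_sum fun i _ => hL i
    rw [Finset.sum_range_sub' g N] at h1
    rw [← Finset.mul_sum] at h1
    have h2 : q * ∑ i ∈ Finset.range N, f i ≤ B ^ (-q) := by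
      have := hgnn N; rw [hg0] at h1; linarith
    calc ∑ i ∈ Finset.range N, f i = 1/q * (q * ∑ i ∈ Finset.range N, f i) := by
          field_simp
      _ ≤ 1/q * B ^ (-q) := by
          exact mul_le_mul_of_nonneg_left h2 (by positivity)
  have hsum : Summable f := summable_of_sum_range_le hfnn hub
  have htsum_ub : ∑' i, f i ≤ 1/q * B ^ (-q) := Real.tsum_le_of_sum_range_le hfnn hub
  -- summability of h i = (B+i)^(-(q+1))
  set h : ℕ → ℝ := fun i => (B + (i:ℝ)) ^ (-(q+1)) with hhdef
  have hh1 : (fun i : ℕ => h (i+1)) = f := by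
    funext i; simp only [hhdef, hfdef]; push_cast; ring_nf
  have hsumh : Summable h := by
    have : Summable (fun i : ℕ => h (i+1)) := by rw [hh1]; exact hsum
    exact (summable_nat_add_iff 1).mp this
  have hhnn : ∀ i : ℕ, 0 ≤ h i := fun i => Real.rpow_nonneg (by linarith [hxi i]) _
  -- lower bound
  have hlb : ∀ N : ℕ, g 0 - g N ≤ q * ∑' i, h i := by
    intro N
    have h1 : ∑ i ∈ Finset.range N, (g i - g (i+1)) ≤ ∑ i ∈ Finset.range N, (q * h i) :=
      Finset.sum_le_sum fun i _ => hH i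
    rw [Finset.sum_range_sub' g N, ← Finset.mul_sum] at h1
    have h2 : ∑ i ∈ Finset.range N, h i ≤ ∑' i, h i :=
      Summable.sum_le_tsum _ (fun i _ => hhnn i) hsumh
    nlinarith
  have hgN : Filter.Tendsto (fun N : ℕ => g N) Filter.atTop (nhds 0) := by
    have h1 : Filter.Tendsto (fun N : ℕ => B + (N:ℝ)) Filter.atTop Filter.atTop :=
      Filter.tendsto_atTop_add_const_left _ B tendsto_natCast_atTop_atTop
    exact (tendsto_rpow_neg_atTop hq0).comp h1
  have hglim : Filter.Tendsto (fun N : ℕ => g 0 - g N) Filter.atTop (nhds (g 0)) := by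
    have := Filter.Tendsto.const_sub (g 0) hgN
    simpa using this
  have hmain : g 0 ≤ q * ∑' i, h i :=
    le_of_tendsto hglim (Filter.Eventually.of_forall hlb)
  have hsplit : ∑' i, h i = B ^ (-(q+1)) + ∑' i, f i := by
    rw [Summable.tsum_eq_zero_add hsumh, hh1]
    simp [hhdef]
  -- B^(-(q+1)) is small
  have hBp : B ^ (-(q+1)) * (2*q) ≤ B ^ (-q) := by
    have e : B ^ (-(q+1)) = B ^ (-q) * B⁻¹ := by
      rw [show -(q+1) = -q + (-1) by ring, Real.rpow_add hB0, Real.rpow_neg_one]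
    rw [e]
    have h1 : B⁻¹ * (2*q) ≤ 1 := by
      rw [inv_mul_le_iff₀ hB0]
      linarith
    calc B ^ (-q) * B⁻¹ * (2*q) = B ^ (-q) * (B⁻¹ * (2*q)) := by ring
      _ ≤ B ^ (-q) * 1 := mul_le_mul_of_nonneg_left h1 (Real.rpow_nonneg hB0.le _)
      _ = B ^ (-q) := mul_one _
  have hlow : 1/(2*q) * B ^ (-q) ≤ ∑' i, f i := by
    rw [hg0, hsplit] at hmain
    have key : B ^ (-q) ≤ 2*q * ∑' i, f i := by nlinarith
    calc 1/(2*q) * B ^ (-q) ≤ 1/(2*q) * (2*q * ∑' i, f i) :=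
          mul_le_mul_of_nonneg_left key (by positivity)
      _ = ∑' i, f i := by field_simp
  exact ⟨hsum, hlow, htsum_ub⟩

end myaux

set_option maxHeartbeats 1000000

/-- Mean and variance asymptotics of the over-smoothed Gaussian quadratic form (used in
Theorem 7): for every `σ, β > 0` there exist `0 < c ≤ C` and `N` such that for all `n ≥ N`,
`c n^{-(1+2β)/(2+2β)} ≤ Σᵢ σ² n/(n + σ² i^{2+2β})² ≤ C n^{-(1+2β)/(2+2β)}` and
`c n^{-(3+4β)/(2+2β)} ≤ Σᵢ σ⁴ n²/(n + σ² i^{2+2β})⁴ ≤ C n^{-(3+4β)/(2+2β)}`, the series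
running over the positive integers (coordinate `i : ℕ` is the integer `i + 1`). These are
respectively the mean of the Gaussian quadratic form `S = Σᵢ σ² n Uᵢ²/(n + σ² i^{2+2β})²`
and half its variance, so the standard deviation of `S` is of smaller order than its
mean. -/
theorem oversmoothed_quadratic_form_mean_variance_asymptotics
    (σ β : ℝ) (hσ : 0 < σ) (hβ : 0 < β) :
    ∃ c C N : ℝ, 0 < c ∧ c ≤ C ∧
      ∀ n : ℝ, N ≤ n →
        (c * n ^ (-((1 + 2 * β) / (2 + 2 * β)))
            ≤ (∑' i : ℕ, σ ^ 2 * n / (n + σ ^ 2 * ((i : ℝ) + 1) ^ (2 + 2 * β)) ^ 2) ∧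
          (∑' i : ℕ, σ ^ 2 * n / (n + σ ^ 2 * ((i : ℝ) + 1) ^ (2 + 2 * β)) ^ 2)
            ≤ C * n ^ (-((1 + 2 * β) / (2 + 2 * β)))) ∧
        (c * n ^ (-((3 + 4 * β) / (2 + 2 * β)))
            ≤ (∑' i : ℕ, σ ^ 4 * n ^ 2 / (n + σ ^ 2 * ((i : ℝ) + 1) ^ (2 + 2 * β)) ^ 4) ∧
          (∑' i : ℕ, σ ^ 4 * n ^ 2 / (n + σ ^ 2 * ((i : ℝ) + 1) ^ (2 + 2 * β)) ^ 4)
            ≤ C * n ^ (-((3 + 4 * β) / (2 + 2 * β)))) := by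
  set a : ℝ := 2 + 2 * β with hadef
  have ha2 : 2 < a := by rw [hadef]; linarith
  have ha0 : (0:ℝ) < a := by linarith
  have ha1 : (1:ℝ) ≤ a := by linarith
  have hσ2 : (0:ℝ) < σ ^ 2 := by positivity
  have h2a1 : (0:ℝ) < 2 * a - 1 := by linarith
  have h4a1 : (0:ℝ) < 4 * a - 1 := by linarith
  have h2pow1 : (1:ℝ) ≤ 2 ^ a := by
    calc (1:ℝ) = (2:ℝ) ^ (0:ℝ) := by simp
      _ ≤ 2 ^ a := Real.rpow_le_rpow_of_exponent_le one_le_two ha0.le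
  have h2pow0 : (0:ℝ) < 2 ^ a := by linarith
  set e₁ : ℝ := (1 - a) / a with he₁def
  set e₂ : ℝ := (1 - 2 * a) / a with he₂def
  have hK₁0 : (0:ℝ) < ((σ^2) ^ e₁)⁻¹ := by positivity
  have hK₂0 : (0:ℝ) < ((σ^2) ^ e₂)⁻¹ := by positivity
  set K₁ : ℝ := ((σ^2) ^ e₁)⁻¹ with hK₁def
  set K₂ : ℝ := ((σ^2) ^ e₂)⁻¹ with hK₂def
  set c₁ : ℝ := K₁ * (1 / (8 * (2 * a - 1))) with hc₁def
  set C₁ : ℝ := K₁ * ((2 ^ a) ^ 2 * (1 / (2 * a - 1))) with hC₁def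
  set c₂ : ℝ := K₂ * (1 / (32 * (4 * a - 1))) with hc₂def
  set C₂ : ℝ := K₂ * ((2 ^ a) ^ 4 * (1 / (4 * a - 1))) with hC₂def
  have hc₁0 : 0 < c₁ := by positivity
  have hc₂0 : 0 < c₂ := by positivity
  have hc₁C₁ : c₁ ≤ C₁ := by
    apply mul_le_mul_of_nonneg_left _ hK₁0.le
    have h1 : 1 / (8 * (2 * a - 1)) ≤ 1 * (1 / (2 * a - 1)) := by
      rw [one_mul]
      apply one_div_le_one_div_of_le h2a1
      linarith
    refine h1.trans ?_
    apply mul_le_mul_of_nonneg_right _ (by positivity)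
    calc (1:ℝ) = 1 ^ 2 := by norm_num
      _ ≤ (2 ^ a) ^ 2 := pow_le_pow_left₀ (by norm_num) h2pow1 2
  have hc₂C₂ : c₂ ≤ C₂ := by
    apply mul_le_mul_of_nonneg_left _ hK₂0.le
    have h1 : 1 / (32 * (4 * a - 1)) ≤ 1 * (1 / (4 * a - 1)) := by
      rw [one_mul]
      apply one_div_le_one_div_of_le h4a1
      linarith
    refine h1.trans ?_
    apply mul_le_mul_of_nonneg_right _ (by positivity)
    calc (1:ℝ) = 1 ^ 4 := by norm_num
      _ ≤ (2 ^ a) ^ 4 := pow_le_pow_left₀ (by norm_num) h2pow1 4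
  have hN0 : (0:ℝ) < σ ^ 2 * (8 * a) ^ a := by
    have := Real.rpow_pos_of_pos (show (0:ℝ) < 8 * a by linarith) a
    positivity
  refine ⟨min c₁ c₂, max C₁ C₂, σ ^ 2 * (8 * a) ^ a, lt_min hc₁0 hc₂0,
    le_trans (le_trans (min_le_left _ _) hc₁C₁) (le_max_left _ _), ?_⟩
  intro n hn
  have hn0 : (0:ℝ) < n := lt_of_lt_of_le hN0 hn
  obtain ⟨M, hMdef⟩ : ∃ x : ℝ, x = n / σ ^ 2 := ⟨_, rfl⟩
  have hM0 : (0:ℝ) < M := by rw [hMdef]; positivity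
  obtain ⟨B, hBdef⟩ : ∃ x : ℝ, x = M ^ a⁻¹ := ⟨_, rfl⟩
  have hB0 : (0:ℝ) < B := hBdef ▸ Real.rpow_pos_of_pos hM0 _
  have hBa : B ^ a = M := by
    rw [hBdef, ← Real.rpow_mul hM0.le, inv_mul_cancel₀ (ne_of_gt ha0), Real.rpow_one]
  have hMge : (8 * a) ^ a ≤ M := by
    rw [hMdef, le_div_iff₀ hσ2]
    linarith
  have hBge : 8 * a ≤ B := by
    rw [hBdef]
    have h1 : ((8 * a) ^ a) ^ a⁻¹ ≤ M ^ a⁻¹ :=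
      Real.rpow_le_rpow (Real.rpow_nonneg (by linarith) _) hMge (by positivity)
    rwa [← Real.rpow_mul (by linarith : (0:ℝ) ≤ 8 * a),
      mul_inv_cancel₀ (ne_of_gt ha0), Real.rpow_one] at h1
  -- tail bounds
  obtain ⟨S1sum, S1lo, S1hi⟩ := my_tail_bounds (p := 2 * a) (B := B) (by linarith) (by linarith)
  obtain ⟨S2sum, S2lo, S2hi⟩ := my_tail_bounds (p := 4 * a) (B := B) (by linarith) (by linarith)
  -- denominator bounds for each i
  have hE0 : ∀ i : ℕ, (0:ℝ) < B + (i:ℝ) + 1 := fun i => by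
    have : (0:ℝ) ≤ i := Nat.cast_nonneg i
    linarith
  have hy1 : ∀ i : ℕ, (1:ℝ) ≤ (i:ℝ) + 1 := fun i => by
    have : (0:ℝ) ≤ i := Nat.cast_nonneg i
    linarith
  have hD0 : ∀ i : ℕ, (0:ℝ) < (B + (i:ℝ) + 1) ^ a := fun i => Real.rpow_pos_of_pos (hE0 i) _
  have ht0 : ∀ i : ℕ, (0:ℝ) < n + σ ^ 2 * ((i:ℝ) + 1) ^ a := fun i => by
    have : (0:ℝ) < ((i:ℝ) + 1) ^ a := Real.rpow_pos_of_pos (by linarith [hy1 i]) _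
    positivity
  have hden : ∀ i : ℕ,
      σ ^ 2 * ((B + (i:ℝ) + 1) ^ a / 2 ^ a) ≤ n + σ ^ 2 * ((i:ℝ) + 1) ^ a ∧
      n + σ ^ 2 * ((i:ℝ) + 1) ^ a ≤ σ ^ 2 * (2 * (B + (i:ℝ) + 1) ^ a) := by
    intro i
    obtain ⟨y, hydef⟩ : ∃ x : ℝ, x = (i:ℝ) + 1 := ⟨_, rfl⟩
    rw [← hydef]
    have hy0 : (0:ℝ) < y := by linarith [hy1 i]
    have hkey : n + σ ^ 2 * y ^ a = σ ^ 2 * (B ^ a + y ^ a) := by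
      rw [hBa, hMdef]
      field_simp
    have hBE : B ^ a ≤ (B + y) ^ a := Real.rpow_le_rpow hB0.le (by linarith) ha0.le
    have hyE : y ^ a ≤ (B + y) ^ a := Real.rpow_le_rpow hy0.le (by linarith) ha0.le
    have hmax : (B + y) ^ a ≤ 2 ^ a * (B ^ a + y ^ a) := by
      have h1 : B + y ≤ 2 * max B y := by
        rcases le_total B y with h | h
        · rw [max_eq_right h]; linarith
        · rw [max_eq_left h]; linarith
      have h2 : (B + y) ^ a ≤ (2 * max B y) ^ a :=
        Real.rpow_le_rpow (by linarith) h1 ha0.le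
      have h3 : (2 * max B y) ^ a = 2 ^ a * (max B y) ^ a :=
        Real.mul_rpow (by norm_num) (le_max_of_le_left hB0.le)
      have h4 : (max B y) ^ a ≤ B ^ a + y ^ a := by
        rcases le_total B y with h | h
        · rw [max_eq_right h]
          have := Real.rpow_nonneg hB0.le a
          linarith
        · rw [max_eq_left h]
          have := Real.rpow_nonneg hy0.le a
          linarith
      calc (B + y) ^ a ≤ 2 ^ a * (max B y) ^ a := h3 ▸ h2
        _ ≤ 2 ^ a * (B ^ a + y ^ a) := mul_le_mul_of_nonneg_left h4 (by linarith)
    constructor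
    · rw [hkey]
      apply mul_le_mul_of_nonneg_left _ hσ2.le
      rw [div_le_iff₀ h2pow0]
      have heq : B + (i:ℝ) + 1 = B + y := by rw [hydef]; ring
      rw [heq]
      calc (B + y) ^ a ≤ 2 ^ a * (B ^ a + y ^ a) := hmax
        _ = (B ^ a + y ^ a) * 2 ^ a := by ring
    · rw [hkey]
      apply mul_le_mul_of_nonneg_left _ hσ2.le
      have heq : B + (i:ℝ) + 1 = B + y := by rw [hydef]; ring
      rw [heq]
      linarith
  -- rpow to npow conversion
  have hE2 : ∀ i : ℕ, (B + (i:ℝ) + 1) ^ (-(2 * a)) = (((B + (i:ℝ) + 1) ^ a) ^ 2)⁻¹ := by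
    intro i
    rw [show -(2 * a) = -(a * ((2:ℕ):ℝ)) by push_cast; ring, Real.rpow_neg (hE0 i).le,
      Real.rpow_mul (hE0 i).le, Real.rpow_natCast]
  have hE4 : ∀ i : ℕ, (B + (i:ℝ) + 1) ^ (-(4 * a)) = (((B + (i:ℝ) + 1) ^ a) ^ 4)⁻¹ := by
    intro i
    rw [show -(4 * a) = -(a * ((4:ℕ):ℝ)) by push_cast; ring, Real.rpow_neg (hE0 i).le,
      Real.rpow_mul (hE0 i).le, Real.rpow_natCast]
  -- term bounds, first sum
  have T1 : ∀ i : ℕ,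
      M / 4 * ((B + (i:ℝ) + 1) ^ (-(2 * a))) ≤ σ ^ 2 * n / (n + σ ^ 2 * ((i:ℝ) + 1) ^ a) ^ 2 ∧
      σ ^ 2 * n / (n + σ ^ 2 * ((i:ℝ) + 1) ^ a) ^ 2
        ≤ M * (2 ^ a) ^ 2 * ((B + (i:ℝ) + 1) ^ (-(2 * a))) := by
    intro i
    obtain ⟨hd1, hd2⟩ := hden i
    obtain ⟨D, hDdef⟩ : ∃ x : ℝ, x = (B + (i:ℝ) + 1) ^ a := ⟨_, rfl⟩
    have hDpos : (0:ℝ) < D := hDdef ▸ hD0 i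
    obtain ⟨t, htdef⟩ : ∃ x : ℝ, x = n + σ ^ 2 * ((i:ℝ) + 1) ^ a := ⟨_, rfl⟩
    have htpos : (0:ℝ) < t := htdef ▸ ht0 i
    rw [hE2 i, ← hDdef, ← htdef]
    rw [← hDdef, ← htdef] at hd1 hd2
    constructor
    · have h1 : σ ^ 2 * n / t ^ 2 ≥ σ ^ 2 * n / (σ ^ 2 * (2 * D)) ^ 2 := by
        apply div_le_div_of_nonneg_left (by positivity) (by positivity)
        apply pow_le_pow_left₀ htpos.le hd2
      have h2 : σ ^ 2 * n / (σ ^ 2 * (2 * D)) ^ 2 = M / 4 * (D ^ 2)⁻¹ := by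
        rw [hMdef]
        field_simp
        ring
      rw [h2] at h1
      linarith
    · have h1 : σ ^ 2 * n / t ^ 2 ≤ σ ^ 2 * n / (σ ^ 2 * (D / 2 ^ a)) ^ 2 := by
        apply div_le_div_of_nonneg_left (by positivity) (by positivity)
        apply pow_le_pow_left₀ (by positivity) hd1
      have h2 : σ ^ 2 * n / (σ ^ 2 * (D / 2 ^ a)) ^ 2 = M * (2 ^ a) ^ 2 * (D ^ 2)⁻¹ := by
        rw [hMdef]
        field_simp
      rw [h2] at h1
      linarith
  -- term bounds, second sum
  have T2 : ∀ i : ℕ,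
      M ^ 2 / 16 * ((B + (i:ℝ) + 1) ^ (-(4 * a))) ≤ σ ^ 4 * n ^ 2 / (n + σ ^ 2 * ((i:ℝ) + 1) ^ a) ^ 4 ∧
      σ ^ 4 * n ^ 2 / (n + σ ^ 2 * ((i:ℝ) + 1) ^ a) ^ 4
        ≤ M ^ 2 * (2 ^ a) ^ 4 * ((B + (i:ℝ) + 1) ^ (-(4 * a))) := by
    intro i
    obtain ⟨hd1, hd2⟩ := hden i
    obtain ⟨D, hDdef⟩ : ∃ x : ℝ, x = (B + (i:ℝ) + 1) ^ a := ⟨_, rfl⟩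
    have hDpos : (0:ℝ) < D := hDdef ▸ hD0 i
    obtain ⟨t, htdef⟩ : ∃ x : ℝ, x = n + σ ^ 2 * ((i:ℝ) + 1) ^ a := ⟨_, rfl⟩
    have htpos : (0:ℝ) < t := htdef ▸ ht0 i
    rw [hE4 i, ← hDdef, ← htdef]
    rw [← hDdef, ← htdef] at hd1 hd2
    constructor
    · have h1 : σ ^ 4 * n ^ 2 / t ^ 4 ≥ σ ^ 4 * n ^ 2 / (σ ^ 2 * (2 * D)) ^ 4 := by
        apply div_le_div_of_nonneg_left (by positivity) (by positivity)
        apply pow_le_pow_left₀ htpos.le hd2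
      have h2 : σ ^ 4 * n ^ 2 / (σ ^ 2 * (2 * D)) ^ 4 = M ^ 2 / 16 * (D ^ 4)⁻¹ := by
        rw [hMdef]
        field_simp
        ring
      rw [h2] at h1
      linarith
    · have h1 : σ ^ 4 * n ^ 2 / t ^ 4 ≤ σ ^ 4 * n ^ 2 / (σ ^ 2 * (D / 2 ^ a)) ^ 4 := by
        apply div_le_div_of_nonneg_left (by positivity) (by positivity)
        apply pow_le_pow_left₀ (by positivity) hd1
      have h2 : σ ^ 4 * n ^ 2 / (σ ^ 2 * (D / 2 ^ a)) ^ 4 = M ^ 2 * (2 ^ a) ^ 4 * (D ^ 4)⁻¹ := by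
        rw [hMdef]
        field_simp
      rw [h2] at h1
      linarith
  -- summability of the two series
  have hTerm1nn : ∀ i : ℕ, 0 ≤ σ ^ 2 * n / (n + σ ^ 2 * ((i:ℝ) + 1) ^ a) ^ 2 := fun i => by
    have := ht0 i; positivity
  have hTerm2nn : ∀ i : ℕ, 0 ≤ σ ^ 4 * n ^ 2 / (n + σ ^ 2 * ((i:ℝ) + 1) ^ a) ^ 4 := fun i => by
    have := ht0 i; positivity
  have hsum1 : Summable (fun i : ℕ => σ ^ 2 * n / (n + σ ^ 2 * ((i:ℝ) + 1) ^ a) ^ 2) :=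
    Summable.of_nonneg_of_le hTerm1nn (fun i => (T1 i).2) (S1sum.mul_left _)
  have hsum2 : Summable (fun i : ℕ => σ ^ 4 * n ^ 2 / (n + σ ^ 2 * ((i:ℝ) + 1) ^ a) ^ 4) :=
    Summable.of_nonneg_of_le hTerm2nn (fun i => (T2 i).2) (S2sum.mul_left _)
  -- key algebraic identities
  have hMB1 : M * B ^ (1 - 2 * a) = K₁ * n ^ e₁ := by
    have h1 : M * B ^ (1 - 2 * a) = B ^ a * B ^ (1 - 2 * a) := by rw [hBa]
    have h2 : B ^ a * B ^ (1 - 2 * a) = B ^ (1 - a) := by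
      rw [← Real.rpow_add hB0]; congr 1; ring
    have h3 : B ^ (1 - a) = M ^ e₁ := by
      rw [hBdef, ← Real.rpow_mul hM0.le]
      congr 1
      rw [he₁def, inv_mul_eq_div]
    have h4 : M ^ e₁ = K₁ * n ^ e₁ := by
      rw [hMdef, Real.div_rpow hn0.le hσ2.le, hK₁def, div_eq_mul_inv]
      ring
    rw [h1, h2, h3, h4]
  have hMB2 : M ^ 2 * B ^ (1 - 4 * a) = K₂ * n ^ e₂ := by
    have h1 : M ^ 2 * B ^ (1 - 4 * a) = B ^ a * (B ^ a * B ^ (1 - 4 * a)) := by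
      rw [hBa]; ring
    have h2 : B ^ a * (B ^ a * B ^ (1 - 4 * a)) = B ^ (1 - 2 * a) := by
      rw [← Real.rpow_add hB0, ← Real.rpow_add hB0]; congr 1; ring
    have h3 : B ^ (1 - 2 * a) = M ^ e₂ := by
      rw [hBdef, ← Real.rpow_mul hM0.le]
      congr 1
      rw [he₂def, inv_mul_eq_div]
    have h4 : M ^ e₂ = K₂ * n ^ e₂ := by
      rw [hMdef, Real.div_rpow hn0.le hσ2.le, hK₂def, div_eq_mul_inv]
      ring
    rw [h1, h2, h3, h4]
  have hn_e₁ : (0:ℝ) < n ^ e₁ := Real.rpow_pos_of_pos hn0 _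
  have hn_e₂ : (0:ℝ) < n ^ e₂ := Real.rpow_pos_of_pos hn0 _
  have hexp1 : -((1 + 2 * β) / a) = e₁ := by rw [he₁def, hadef]; ring
  have hexp2 : -((3 + 4 * β) / a) = e₂ := by rw [he₂def, hadef]; ring
  refine ⟨⟨?_, ?_⟩, ?_, ?_⟩
  · rw [hexp1]
    calc min c₁ c₂ * n ^ e₁ ≤ c₁ * n ^ e₁ :=
          mul_le_mul_of_nonneg_right (min_le_left _ _) hn_e₁.le
      _ = M / 4 * (1 / (2 * (2 * a - 1)) * B ^ (1 - 2 * a)) := by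
          rw [show M / 4 * (1 / (2 * (2 * a - 1)) * B ^ (1 - 2 * a))
              = 1 / (8 * (2 * a - 1)) * (M * B ^ (1 - 2 * a)) by field_simp [h2a1.ne']; ring, hMB1, hc₁def]
          ring
      _ ≤ M / 4 * (∑' i : ℕ, (B + (i:ℝ) + 1) ^ (-(2 * a))) :=
          mul_le_mul_of_nonneg_left S1lo (by linarith)
      _ = ∑' i : ℕ, (M / 4 * ((B + (i:ℝ) + 1) ^ (-(2 * a)))) := tsum_mul_left.symm
      _ ≤ ∑' i : ℕ, σ ^ 2 * n / (n + σ ^ 2 * ((i:ℝ) + 1) ^ a) ^ 2 :=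
          Summable.tsum_le_tsum (fun i => (T1 i).1) (S1sum.mul_left _) hsum1
  · rw [hexp1]
    calc ∑' i : ℕ, σ ^ 2 * n / (n + σ ^ 2 * ((i:ℝ) + 1) ^ a) ^ 2
        ≤ ∑' i : ℕ, (M * (2 ^ a) ^ 2 * ((B + (i:ℝ) + 1) ^ (-(2 * a)))) :=
          Summable.tsum_le_tsum (fun i => (T1 i).2) hsum1 (S1sum.mul_left _)
      _ = M * (2 ^ a) ^ 2 * ∑' i : ℕ, (B + (i:ℝ) + 1) ^ (-(2 * a)) := tsum_mul_left
      _ ≤ M * (2 ^ a) ^ 2 * (1 / (2 * a - 1) * B ^ (1 - 2 * a)) :=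
          mul_le_mul_of_nonneg_left S1hi (mul_nonneg hM0.le (by positivity))
      _ = C₁ * n ^ e₁ := by
          rw [show M * (2 ^ a) ^ 2 * (1 / (2 * a - 1) * B ^ (1 - 2 * a))
              = (2 ^ a) ^ 2 * (1 / (2 * a - 1)) * (M * B ^ (1 - 2 * a)) by ring, hMB1, hC₁def]
          ring
      _ ≤ max C₁ C₂ * n ^ e₁ := mul_le_mul_of_nonneg_right (le_max_left _ _) hn_e₁.le
  · rw [hexp2]
    calc min c₁ c₂ * n ^ e₂ ≤ c₂ * n ^ e₂ :=
          mul_le_mul_of_nonneg_right (min_le_right _ _) hn_e₂.le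
      _ = M ^ 2 / 16 * (1 / (2 * (4 * a - 1)) * B ^ (1 - 4 * a)) := by
          rw [show M ^ 2 / 16 * (1 / (2 * (4 * a - 1)) * B ^ (1 - 4 * a))
              = 1 / (32 * (4 * a - 1)) * (M ^ 2 * B ^ (1 - 4 * a)) by field_simp [h4a1.ne']; ring, hMB2, hc₂def]
          ring
      _ ≤ M ^ 2 / 16 * (∑' i : ℕ, (B + (i:ℝ) + 1) ^ (-(4 * a))) :=
          mul_le_mul_of_nonneg_left S2lo (by positivity)
      _ = ∑' i : ℕ, (M ^ 2 / 16 * ((B + (i:ℝ) + 1) ^ (-(4 * a)))) := tsum_mul_left.symm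
      _ ≤ ∑' i : ℕ, σ ^ 4 * n ^ 2 / (n + σ ^ 2 * ((i:ℝ) + 1) ^ a) ^ 4 :=
          Summable.tsum_le_tsum (fun i => (T2 i).1) (S2sum.mul_left _) hsum2
  · rw [hexp2]
    calc ∑' i : ℕ, σ ^ 4 * n ^ 2 / (n + σ ^ 2 * ((i:ℝ) + 1) ^ a) ^ 4
        ≤ ∑' i : ℕ, (M ^ 2 * (2 ^ a) ^ 4 * ((B + (i:ℝ) + 1) ^ (-(4 * a)))) :=
          Summable.tsum_le_tsum (fun i => (T2 i).2) hsum2 (S2sum.mul_left _)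
      _ = M ^ 2 * (2 ^ a) ^ 4 * ∑' i : ℕ, (B + (i:ℝ) + 1) ^ (-(4 * a)) := tsum_mul_left
      _ ≤ M ^ 2 * (2 ^ a) ^ 4 * (1 / (4 * a - 1) * B ^ (1 - 4 * a)) :=
          mul_le_mul_of_nonneg_left S2hi (by positivity)
      _ = C₂ * n ^ e₂ := by
          rw [show M ^ 2 * (2 ^ a) ^ 4 * (1 / (4 * a - 1) * B ^ (1 - 4 * a))
              = (2 ^ a) ^ 4 * (1 / (4 * a - 1)) * (M ^ 2 * B ^ (1 - 4 * a)) by ring, hMB2, hC₂def]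
          ring
      _ ≤ max C₁ C₂ * n ^ e₂ := mul_le_mul_of_nonneg_right (le_max_right _ _) hn_e₂.le
end
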